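/- arXiv:1006.2580 — 5 statements merged into one kernel-verified Lean document; each statement's English description precedes it below -/
import Mathlib

section
/- Let α, β ∈ (0, π), let q : ℝ → ℝ be continuous, let c ∈ ℝ, and let f : ℝ → ℝ be concave on [0,1] with f(0) = 0 and f ≥ 0 on [0,1]. Suppose φ_α, φ_β : ℝ² → ℝ are C² functions with values in [0,1] satisfying div(A∇φ_α) + (q(X) sin α − c sin α) ∂_Y φ_α + f(φ_α) = 0 and div(B∇φ_β) + (q(X) sin β − c sin β) ∂_Y φ_β + f(φ_β) = 0 on ℝ², where A = [[1, −cos α],[−cos α, 1]] and B = [[1, cos β],[cos β, 1]]. Then at any point (x,y) where ψ(x,y) := φ_α(x, −x cos α + y sin α) + φ_β(x, x cos β + y sin β) ≤ 1, one has Δψ + (q(x) − c) ∂_y ψ + f(ψ) ≤ 0. -/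
/-- Partial derivative in the first variable. -/
noncomputable def dX (u : ℝ → ℝ → ℝ) : ℝ → ℝ → ℝ := fun x y => deriv (fun s => u s y) x

/-- Partial derivative in the second variable. -/
noncomputable def dY (u : ℝ → ℝ → ℝ) : ℝ → ℝ → ℝ := fun x y => deriv (fun s => u x s) y

private lemma compD (F : ℝ × ℝ → ℝ) (hF : Differentiable ℝ F)
    {γ : ℝ → ℝ × ℝ} {w : ℝ × ℝ} {t : ℝ} (hγ : HasDerivAt γ w t) :
    HasDerivAt (fun s => F (γ s)) (fderiv ℝ F (γ t) w) t :=
  (hF (γ t)).hasFDerivAt.comp_hasDerivAt t hγ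

private lemma compD2 (F : ℝ × ℝ → ℝ) (hF : ContDiff ℝ 2 F) (v : ℝ × ℝ)
    {γ : ℝ → ℝ × ℝ} {w : ℝ × ℝ} {t : ℝ} (hγ : HasDerivAt γ w t) :
    HasDerivAt (fun s => fderiv ℝ F (γ s) v)
      (fderiv ℝ (fderiv ℝ F) (γ t) w v) t := by
  have hF' : Differentiable ℝ (fderiv ℝ F) :=
    (hF.fderiv_right (m := 1) (by norm_num)).differentiable (by norm_num)
  have h := ((ContinuousLinearMap.apply ℝ ℝ v).hasFDerivAt.comp (γ t)
      (hF' (γ t)).hasFDerivAt).comp_hasDerivAt t hγ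
  exact h

private lemma subadd (f : ℝ → ℝ) (hconc : ConcaveOn ℝ (Set.Icc (0:ℝ) 1) f) (hf0 : f 0 = 0)
    {a b : ℝ} (ha : 0 ≤ a) (hb : 0 ≤ b) (hab : a + b ≤ 1) :
    f (a + b) ≤ f a + f b := by
  rcases eq_or_lt_of_le (add_nonneg ha hb) with h0 | h0
  · simp [← h0, show a = 0 by linarith, show b = 0 by linarith, hf0]
  · set t := a + b with ht
    have htmem : t ∈ Set.Icc (0:ℝ) 1 := ⟨le_of_lt h0, hab⟩
    have h0mem : (0:ℝ) ∈ Set.Icc (0:ℝ) 1 := by constructor <;> norm_num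
    have h1 : a / t * f t + b / t * f 0 ≤ f (a / t * t + b / t * 0) := by
      have := hconc.2 htmem h0mem (div_nonneg ha h0.le) (div_nonneg hb h0.le)
        (by field_simp; exact ht.symm)
      simpa [smul_eq_mul] using this
    have h2 : b / t * f t + a / t * f 0 ≤ f (b / t * t + a / t * 0) := by
      have := hconc.2 htmem h0mem (div_nonneg hb h0.le) (div_nonneg ha h0.le)
        (by field_simp; linarith)
      simpa [smul_eq_mul] using this
    have hat : a / t * t = a := by field_simp
    have hbt : b / t * t = b := by field_simp
    rw [hat, mul_zero, add_zero, hf0, mul_zero] at h1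
    rw [hbt, mul_zero, add_zero, hf0, mul_zero] at h2
    have : a / t * f t + b / t * f t = f t := by
      field_simp
      ring
    linarith

/-- The sum ψ of the left and right oblique planar fronts is a supersolution of
Δψ + (q(x) − c)∂_yψ + f(ψ) = 0 at any point where ψ ≤ 1, using sub-additivity of f
(f concave on [0,1], f(0) = 0, f ≥ 0 on [0,1]).
Here A = [[1, −cos α],[−cos α, 1]], B = [[1, cos β],[cos β, 1]]. -/
theorem stmt4 (α β c : ℝ) (hα : α ∈ Set.Ioo 0 Real.pi) (hβ : β ∈ Set.Ioo 0 Real.pi)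
    (q f : ℝ → ℝ) (hq : Continuous q)
    (hconc : ConcaveOn ℝ (Set.Icc (0:ℝ) 1) f) (hf0 : f 0 = 0)
    (hfnonneg : ∀ s ∈ Set.Icc (0:ℝ) 1, 0 ≤ f s)
    (φα φβ : ℝ → ℝ → ℝ)
    (hφαreg : ContDiff ℝ 2 (fun p : ℝ × ℝ => φα p.1 p.2))
    (hφβreg : ContDiff ℝ 2 (fun p : ℝ × ℝ => φβ p.1 p.2))
    (hφαrange : ∀ X Y : ℝ, φα X Y ∈ Set.Icc (0:ℝ) 1)
    (hφβrange : ∀ X Y : ℝ, φβ X Y ∈ Set.Icc (0:ℝ) 1)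
    (heqα : ∀ X Y : ℝ,
      dX (dX φα) X Y - 2 * Real.cos α * dY (dX φα) X Y + dY (dY φα) X Y
        + (q X * Real.sin α - c * Real.sin α) * dY φα X Y + f (φα X Y) = 0)
    (heqβ : ∀ X Y : ℝ,
      dX (dX φβ) X Y + 2 * Real.cos β * dY (dX φβ) X Y + dY (dY φβ) X Y
        + (q X * Real.sin β - c * Real.sin β) * dY φβ X Y + f (φβ X Y) = 0) :
    ∀ x y : ℝ,
      (φα x (-x * Real.cos α + y * Real.sin α) + φβ x (x * Real.cos β + y * Real.sin β) ≤ 1) →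
      dX (dX (fun x' y' => φα x' (-x' * Real.cos α + y' * Real.sin α)
          + φβ x' (x' * Real.cos β + y' * Real.sin β))) x y
        + dY (dY (fun x' y' => φα x' (-x' * Real.cos α + y' * Real.sin α)
          + φβ x' (x' * Real.cos β + y' * Real.sin β))) x y
        + (q x - c) * dY (fun x' y' => φα x' (-x' * Real.cos α + y' * Real.sin α)
          + φβ x' (x' * Real.cos β + y' * Real.sin β)) x y
        + f (φα x (-x * Real.cos α + y * Real.sin α)
          + φβ x (x * Real.cos β + y * Real.sin β)) ≤ 0 := by
  intro x y hsum
  set cA := Real.cos α with hcA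
  set sA := Real.sin α with hsA
  set cB := Real.cos β with hcB
  set sB := Real.sin β with hsB
  set Fα : ℝ × ℝ → ℝ := fun p => φα p.1 p.2 with hFαdef
  set Fβ : ℝ × ℝ → ℝ := fun p => φβ p.1 p.2 with hFβdef
  have hdFα : Differentiable ℝ Fα := hφαreg.differentiable (by norm_num)
  have hdFβ : Differentiable ℝ Fβ := hφβreg.differentiable (by norm_num)
  set u : ℝ → ℝ → ℝ := fun x' y' => φα x' (-x' * cA + y' * sA) + φβ x' (x' * cB + y' * sB)
    with hudef
  -- curves
  have cxα : ∀ X Y : ℝ, HasDerivAt (fun s : ℝ => -s * cA + Y * sA) (-cA) X := by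
    intro X Y
    simpa using (((hasDerivAt_id X).neg.mul_const cA).add_const (Y * sA))
  have cxβ : ∀ X Y : ℝ, HasDerivAt (fun s : ℝ => s * cB + Y * sB) cB X := by
    intro X Y
    simpa using (((hasDerivAt_id X).mul_const cB).add_const (Y * sB))
  have cyα : ∀ X Y : ℝ, HasDerivAt (fun t : ℝ => -X * cA + t * sA) sA Y := by
    intro X Y
    simpa using (((hasDerivAt_id Y).mul_const sA).const_add (-X * cA))
  have cyβ : ∀ X Y : ℝ, HasDerivAt (fun t : ℝ => X * cB + t * sB) sB Y := by
    intro X Y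
    simpa using (((hasDerivAt_id Y).mul_const sB).const_add (X * cB))
  have γxα : ∀ X Y : ℝ, HasDerivAt (fun s : ℝ => ((s, -s * cA + Y * sA) : ℝ × ℝ))
      ((1 : ℝ), -cA) X := fun X Y => (hasDerivAt_id X).prodMk (cxα X Y)
  have γxβ : ∀ X Y : ℝ, HasDerivAt (fun s : ℝ => ((s, s * cB + Y * sB) : ℝ × ℝ))
      ((1 : ℝ), cB) X := fun X Y => (hasDerivAt_id X).prodMk (cxβ X Y)
  have γyα : ∀ X Y : ℝ, HasDerivAt (fun t : ℝ => ((X, -X * cA + t * sA) : ℝ × ℝ))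
      ((0 : ℝ), sA) Y := fun X Y => (hasDerivAt_const Y X).prodMk (cyα X Y)
  have γyβ : ∀ X Y : ℝ, HasDerivAt (fun t : ℝ => ((X, X * cB + t * sB) : ℝ × ℝ))
      ((0 : ℝ), sB) Y := fun X Y => (hasDerivAt_const Y X).prodMk (cyβ X Y)
  -- first partials of φα, φβ everywhere
  have hα_dX : ∀ X Y : ℝ, dX φα X Y = fderiv ℝ Fα (X, Y) (1, 0) := fun X Y =>
    (compD Fα hdFα ((hasDerivAt_id X).prodMk (hasDerivAt_const X Y))).deriv
  have hα_dY : ∀ X Y : ℝ, dY φα X Y = fderiv ℝ Fα (X, Y) (0, 1) := fun X Y =>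
    (compD Fα hdFα ((hasDerivAt_const Y X).prodMk (hasDerivAt_id Y))).deriv
  have hβ_dX : ∀ X Y : ℝ, dX φβ X Y = fderiv ℝ Fβ (X, Y) (1, 0) := fun X Y =>
    (compD Fβ hdFβ ((hasDerivAt_id X).prodMk (hasDerivAt_const X Y))).deriv
  have hβ_dY : ∀ X Y : ℝ, dY φβ X Y = fderiv ℝ Fβ (X, Y) (0, 1) := fun X Y =>
    (compD Fβ hdFβ ((hasDerivAt_const Y X).prodMk (hasDerivAt_id Y))).deriv
  -- second partials of φα, φβ everywhere
  have hα_dXdX : ∀ X Y : ℝ,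
      dX (dX φα) X Y = fderiv ℝ (fderiv ℝ Fα) (X, Y) (1, 0) (1, 0) := by
    intro X Y
    have hfe : (fun s => dX φα s Y) = fun s => fderiv ℝ Fα (s, Y) (1, 0) :=
      funext fun s => hα_dX s Y
    show deriv (fun s => dX φα s Y) X = _
    rw [hfe]
    exact (compD2 Fα hφαreg (1, 0) ((hasDerivAt_id X).prodMk (hasDerivAt_const X Y))).deriv
  have hα_dYdX : ∀ X Y : ℝ,
      dY (dX φα) X Y = fderiv ℝ (fderiv ℝ Fα) (X, Y) (0, 1) (1, 0) := by
    intro X Y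
    have hfe : (fun t => dX φα X t) = fun t => fderiv ℝ Fα (X, t) (1, 0) :=
      funext fun t => hα_dX X t
    show deriv (fun t => dX φα X t) Y = _
    rw [hfe]
    exact (compD2 Fα hφαreg (1, 0) ((hasDerivAt_const Y X).prodMk (hasDerivAt_id Y))).deriv
  have hα_dYdY : ∀ X Y : ℝ,
      dY (dY φα) X Y = fderiv ℝ (fderiv ℝ Fα) (X, Y) (0, 1) (0, 1) := by
    intro X Y
    have hfe : (fun t => dY φα X t) = fun t => fderiv ℝ Fα (X, t) (0, 1) :=
      funext fun t => hα_dY X t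
    show deriv (fun t => dY φα X t) Y = _
    rw [hfe]
    exact (compD2 Fα hφαreg (0, 1) ((hasDerivAt_const Y X).prodMk (hasDerivAt_id Y))).deriv
  have hβ_dXdX : ∀ X Y : ℝ,
      dX (dX φβ) X Y = fderiv ℝ (fderiv ℝ Fβ) (X, Y) (1, 0) (1, 0) := by
    intro X Y
    have hfe : (fun s => dX φβ s Y) = fun s => fderiv ℝ Fβ (s, Y) (1, 0) :=
      funext fun s => hβ_dX s Y
    show deriv (fun s => dX φβ s Y) X = _
    rw [hfe]
    exact (compD2 Fβ hφβreg (1, 0) ((hasDerivAt_id X).prodMk (hasDerivAt_const X Y))).deriv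
  have hβ_dYdX : ∀ X Y : ℝ,
      dY (dX φβ) X Y = fderiv ℝ (fderiv ℝ Fβ) (X, Y) (0, 1) (1, 0) := by
    intro X Y
    have hfe : (fun t => dX φβ X t) = fun t => fderiv ℝ Fβ (X, t) (1, 0) :=
      funext fun t => hβ_dX X t
    show deriv (fun t => dX φβ X t) Y = _
    rw [hfe]
    exact (compD2 Fβ hφβreg (1, 0) ((hasDerivAt_const Y X).prodMk (hasDerivAt_id Y))).deriv
  have hβ_dYdY : ∀ X Y : ℝ,
      dY (dY φβ) X Y = fderiv ℝ (fderiv ℝ Fβ) (X, Y) (0, 1) (0, 1) := by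
    intro X Y
    have hfe : (fun t => dY φβ X t) = fun t => fderiv ℝ Fβ (X, t) (0, 1) :=
      funext fun t => hβ_dY X t
    show deriv (fun t => dY φβ X t) Y = _
    rw [hfe]
    exact (compD2 Fβ hφβreg (0, 1) ((hasDerivAt_const Y X).prodMk (hasDerivAt_id Y))).deriv
  -- partials of the composition u
  have hu_dX : ∀ X Y : ℝ, dX u X Y
      = fderiv ℝ Fα (X, -X * cA + Y * sA) (1, -cA)
        + fderiv ℝ Fβ (X, X * cB + Y * sB) (1, cB) := fun X Y =>
    ((compD Fα hdFα (γxα X Y)).add (compD Fβ hdFβ (γxβ X Y))).deriv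
  have hu_dY : ∀ X Y : ℝ, dY u X Y
      = fderiv ℝ Fα (X, -X * cA + Y * sA) (0, sA)
        + fderiv ℝ Fβ (X, X * cB + Y * sB) (0, sB) := fun X Y =>
    ((compD Fα hdFα (γyα X Y)).add (compD Fβ hdFβ (γyβ X Y))).deriv
  have hu_dXdX : dX (dX u) x y
      = fderiv ℝ (fderiv ℝ Fα) (x, -x * cA + y * sA) (1, -cA) (1, -cA)
        + fderiv ℝ (fderiv ℝ Fβ) (x, x * cB + y * sB) (1, cB) (1, cB) := by
    have hfe : (fun s => dX u s y)
        = fun s => fderiv ℝ Fα (s, -s * cA + y * sA) (1, -cA)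
          + fderiv ℝ Fβ (s, s * cB + y * sB) (1, cB) := funext fun s => hu_dX s y
    show deriv (fun s => dX u s y) x = _
    rw [hfe]
    exact ((compD2 Fα hφαreg (1, -cA) (γxα x y)).add
      (compD2 Fβ hφβreg (1, cB) (γxβ x y))).deriv
  have hu_dYdY : dY (dY u) x y
      = fderiv ℝ (fderiv ℝ Fα) (x, -x * cA + y * sA) (0, sA) (0, sA)
        + fderiv ℝ (fderiv ℝ Fβ) (x, x * cB + y * sB) (0, sB) (0, sB) := by
    have hfe : (fun t => dY u x t)
        = fun t => fderiv ℝ Fα (x, -x * cA + t * sA) (0, sA)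
          + fderiv ℝ Fβ (x, x * cB + t * sB) (0, sB) := funext fun t => hu_dY x t
    show deriv (fun t => dY u x t) y = _
    rw [hfe]
    exact ((compD2 Fα hφαreg (0, sA) (γyα x y)).add
      (compD2 Fβ hφβreg (0, sB) (γyβ x y))).deriv
  -- bilinear expansions
  have hsymα : fderiv ℝ (fderiv ℝ Fα) (x, -x * cA + y * sA) (1, 0) (0, 1)
      = fderiv ℝ (fderiv ℝ Fα) (x, -x * cA + y * sA) (0, 1) (1, 0) :=
    (hφαreg.contDiffAt.isSymmSndFDerivAt (by norm_num)) (1, 0) (0, 1)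
  have hsymβ : fderiv ℝ (fderiv ℝ Fβ) (x, x * cB + y * sB) (1, 0) (0, 1)
      = fderiv ℝ (fderiv ℝ Fβ) (x, x * cB + y * sB) (0, 1) (1, 0) :=
    (hφβreg.contDiffAt.isSymmSndFDerivAt (by norm_num)) (1, 0) (0, 1)
  have hvα : ((1 : ℝ), -cA) = ((1 : ℝ), (0 : ℝ)) + (-cA) • ((0 : ℝ), (1 : ℝ)) := by
    simp [Prod.ext_iff]
  have hvβ : ((1 : ℝ), cB) = ((1 : ℝ), (0 : ℝ)) + cB • ((0 : ℝ), (1 : ℝ)) := by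
    simp [Prod.ext_iff]
  have hwα : ((0 : ℝ), sA) = sA • ((0 : ℝ), (1 : ℝ)) := by simp [Prod.ext_iff]
  have hwβ : ((0 : ℝ), sB) = sB • ((0 : ℝ), (1 : ℝ)) := by simp [Prod.ext_iff]
  have expα : fderiv ℝ (fderiv ℝ Fα) (x, -x * cA + y * sA) (1, -cA) (1, -cA)
      = fderiv ℝ (fderiv ℝ Fα) (x, -x * cA + y * sA) (1, 0) (1, 0)
        - 2 * cA * fderiv ℝ (fderiv ℝ Fα) (x, -x * cA + y * sA) (0, 1) (1, 0)
        + cA ^ 2 * fderiv ℝ (fderiv ℝ Fα) (x, -x * cA + y * sA) (0, 1) (0, 1) := by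
    rw [hvα]
    simp only [map_add, map_smul, ContinuousLinearMap.add_apply,
      ContinuousLinearMap.smul_apply, smul_eq_mul]
    rw [hsymα]
    ring
  have expβ : fderiv ℝ (fderiv ℝ Fβ) (x, x * cB + y * sB) (1, cB) (1, cB)
      = fderiv ℝ (fderiv ℝ Fβ) (x, x * cB + y * sB) (1, 0) (1, 0)
        + 2 * cB * fderiv ℝ (fderiv ℝ Fβ) (x, x * cB + y * sB) (0, 1) (1, 0)
        + cB ^ 2 * fderiv ℝ (fderiv ℝ Fβ) (x, x * cB + y * sB) (0, 1) (0, 1) := by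
    rw [hvβ]
    simp only [map_add, map_smul, ContinuousLinearMap.add_apply,
      ContinuousLinearMap.smul_apply, smul_eq_mul]
    rw [hsymβ]
    ring
  have expα2 : fderiv ℝ (fderiv ℝ Fα) (x, -x * cA + y * sA) (0, sA) (0, sA)
      = sA ^ 2 * fderiv ℝ (fderiv ℝ Fα) (x, -x * cA + y * sA) (0, 1) (0, 1) := by
    rw [hwα]
    simp only [map_smul, ContinuousLinearMap.smul_apply, smul_eq_mul]
    ring
  have expβ2 : fderiv ℝ (fderiv ℝ Fβ) (x, x * cB + y * sB) (0, sB) (0, sB)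
      = sB ^ 2 * fderiv ℝ (fderiv ℝ Fβ) (x, x * cB + y * sB) (0, 1) (0, 1) := by
    rw [hwβ]
    simp only [map_smul, ContinuousLinearMap.smul_apply, smul_eq_mul]
    ring
  have expDα : fderiv ℝ Fα (x, -x * cA + y * sA) (0, sA)
      = sA * fderiv ℝ Fα (x, -x * cA + y * sA) (0, 1) := by
    rw [hwα]
    simp only [map_smul, smul_eq_mul]
  have expDβ : fderiv ℝ Fβ (x, x * cB + y * sB) (0, sB)
      = sB * fderiv ℝ Fβ (x, x * cB + y * sB) (0, 1) := by
    rw [hwβ]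
    simp only [map_smul, smul_eq_mul]
  -- trig identities
  have pythA : cA ^ 2 + sA ^ 2 = 1 := by rw [hcA, hsA]; exact Real.cos_sq_add_sin_sq α
  have pythB : cB ^ 2 + sB ^ 2 = 1 := by rw [hcB, hsB]; exact Real.cos_sq_add_sin_sq β
  -- the PDE at the shifted points
  have Eα := heqα x (-x * cA + y * sA)
  have Eβ := heqβ x (x * cB + y * sB)
  rw [hα_dXdX, hα_dYdX, hα_dYdY, hα_dY] at Eα
  rw [hβ_dXdX, hβ_dYdX, hβ_dYdY, hβ_dY] at Eβ
  -- range facts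
  have haval := hφαrange x (-x * cA + y * sA)
  have hbval := hφβrange x (x * cB + y * sB)
  have hsub := subadd f hconc hf0 haval.1 hbval.1 hsum
  -- assemble
  have hLHS : dX (dX u) x y + dY (dY u) x y + (q x - c) * dY u x y
      = - f (φα x (-x * cA + y * sA)) - f (φβ x (x * cB + y * sB)) := by
    rw [hu_dXdX, hu_dYdY, hu_dY x y]
    rw [expα, expβ, expα2, expβ2, expDα, expDβ]
    linear_combination Eα + Eβ
      + fderiv ℝ (fderiv ℝ Fα) (x, -x * cA + y * sA) (0, 1) (0, 1) * pythA
      + fderiv ℝ (fderiv ℝ Fβ) (x, x * cB + y * sB) (0, 1) (0, 1) * pythB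
  have hgoal : dX (dX u) x y + dY (dY u) x y + (q x - c) * dY u x y
      + f (φα x (-x * cA + y * sA) + φβ x (x * cB + y * sB)) ≤ 0 := by
    rw [hLHS]
    linarith [hsub]
  exact hgoal
end

section
/- Let q : ℝ → ℝ be continuous, L-periodic with ∫₀^L q = 0, let c > 0, θ ∈ ℝ, Λ ∈ ℝ, and f'(0) > 0. Suppose for each λ ∈ ℝ, k_θ(λ) denotes the principal eigenvalue of the operator L_{θ,λ} g = g'' + 2θ g' + (θ² + λ² − cλ + q(x)λ + f'(0)) g acting on L-periodic C² functions, with positive L-periodic principal eigenfunction. Then k_θ(0) = θ² + f'(0) > 0 and the derivative of λ ↦ k_θ(λ) at λ = 0 equals −c < 0. -/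
open Set Function Real Topology Filter

lemma periodic_exists_max {f : ℝ → ℝ} {L : ℝ} (hL : 0 < L) (hf : Continuous f)
    (hper : Function.Periodic f L) : ∃ x₁, ∀ y, f y ≤ f x₁ := by
  obtain ⟨x₁, _, hmax⟩ := isCompact_Icc.exists_isMaxOn (s := Icc (0:ℝ) L)
    (nonempty_Icc.mpr hL.le) hf.continuousOn
  refine ⟨x₁, fun y => ?_⟩
  obtain ⟨z, hz, hyz⟩ := hper.exists_mem_Ico₀ hL y
  rw [hyz]; exact hmax (Ico_subset_Icc_self hz)

lemma periodic_exists_min {f : ℝ → ℝ} {L : ℝ} (hL : 0 < L) (hf : Continuous f)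
    (hper : Function.Periodic f L) : ∃ x₀, ∀ y, f x₀ ≤ f y := by
  obtain ⟨x₀, h⟩ := periodic_exists_max hL hf.neg (fun x => by simp [hper x])
  exact ⟨x₀, fun y => by have := h y; simpa using this⟩

lemma deriv2_nonpos_at_max {f : ℝ → ℝ} (hf : ContDiff ℝ 2 f) {x₁ : ℝ}
    (hmax : ∀ y, f y ≤ f x₁) : deriv f x₁ = 0 ∧ deriv (deriv f) x₁ ≤ 0 := by
  have hd : Differentiable ℝ f := hf.differentiable (by norm_num)
  have hd2 : Differentiable ℝ (deriv f) := by
    rw [show (2 : WithTop ℕ∞) = 1 + 1 from by norm_num] at hf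
    exact (contDiff_succ_iff_deriv.mp hf).2.2.differentiable one_ne_zero
  have hloc : IsLocalMax f x₁ := Filter.Eventually.of_forall hmax
  have h1 : deriv f x₁ = 0 := hloc.deriv_eq_zero
  refine ⟨h1, ?_⟩
  by_contra hcon
  push_neg at hcon
  have hD : HasDerivAt (deriv f) (deriv (deriv f) x₁) x₁ := (hd2 x₁).hasDerivAt
  have hT := hasDerivAt_iff_tendsto_slope.mp hD
  have hev : ∀ᶠ y in 𝓝[>] x₁, 0 < slope (deriv f) x₁ y :=
    (hT.eventually (eventually_gt_nhds hcon)).filter_mono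
      (nhdsWithin_mono x₁ fun y hy => ne_of_gt hy)
  obtain ⟨b, hb, hball⟩ := mem_nhdsGT_iff_exists_Ioc_subset.mp hev
  have hx₁b : x₁ < b := hb
  obtain ⟨ξ, hξ, hslope⟩ := exists_hasDerivAt_eq_slope f (deriv f) hx₁b
    hd.continuous.continuousOn (fun x _ => (hd x).hasDerivAt)
  have hpos : 0 < deriv f ξ := by
    have hmem : ξ ∈ Ioc x₁ b := ⟨hξ.1, hξ.2.le⟩
    have := hball hmem
    have hslope' : slope (deriv f) x₁ ξ = deriv f ξ / (ξ - x₁) := by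
      rw [slope_def_field, h1]; ring
    simp only [mem_setOf_eq] at this
    rw [hslope', div_pos_iff] at this
    rcases this with ⟨h, _⟩ | ⟨_, h2⟩
    · exact h
    · linarith [hξ.1]
  rw [hslope] at hpos
  have : f b ≤ f x₁ := hmax b
  rw [div_pos_iff] at hpos
  rcases hpos with ⟨h, _⟩ | ⟨_, h2⟩ <;> linarith

lemma deriv2_nonneg_at_min {f : ℝ → ℝ} (hf : ContDiff ℝ 2 f) {x₀ : ℝ}
    (hmin : ∀ y, f x₀ ≤ f y) : deriv f x₀ = 0 ∧ 0 ≤ deriv (deriv f) x₀ := by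
  have hd : Differentiable ℝ f := hf.differentiable (by norm_num)
  have hneg := deriv2_nonpos_at_max (f := fun x => -f x) hf.neg
    (x₁ := x₀) (fun y => neg_le_neg (hmin y))
  have e1 : deriv (fun x => -f x) = fun x => -deriv f x := by
    funext x; exact deriv.neg
  rw [e1] at hneg
  have e2 : deriv (fun x => -deriv f x) x₀ = -deriv (deriv f) x₀ := deriv.neg
  rw [e2] at hneg
  constructor
  · have := hneg.1; simp at this; linarith
  · linarith [hneg.2]

lemma abs_le_of_quad {θ x b r : ℝ} (hb : x^2 + 2*θ*x = b) (hbr : |b| ≤ r) :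
    |x| ≤ 2*|θ| + Real.sqrt r := by
  by_contra h
  push_neg at h
  have hr : 0 ≤ r := le_trans (abs_nonneg b) hbr
  have hs : 0 ≤ Real.sqrt r := Real.sqrt_nonneg r
  have hθ : 0 ≤ |θ| := abs_nonneg θ
  have h1 : Real.sqrt r < |x| := by linarith
  have h2 : Real.sqrt r < |x + 2*θ| := by
    have hx : |x| ≤ |x + 2*θ| + 2*|θ| := by
      calc |x| = |(x + 2*θ) + (-(2*θ))| := by ring_nf
        _ ≤ |x + 2*θ| + |(-(2*θ))| := abs_add_le _ _
        _ = |x + 2*θ| + 2*|θ| := by rw [abs_neg, abs_mul]; simp [abs_of_nonneg]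
    linarith
  have hb2 : |b| = |x| * |x + 2*θ| := by
    rw [← abs_mul, ← hb]; ring_nf
  have : r < |x| * |x + 2*θ| := by
    nlinarith [Real.sq_sqrt hr]
  linarith

set_option maxHeartbeats 1000000 in
lemma key_lemma (L c θ f'0 lam M K : ℝ) (hL : 0 < L)
    (q : ℝ → ℝ) (hq : Continuous q)
    (hqmean : (∫ x in (0:ℝ)..L, q x) = 0)
    (hM : ∀ x, |q x| ≤ M)
    (φ : ℝ → ℝ) (hφ : ContDiff ℝ 2 φ) (hφper : Function.Periodic φ L)
    (hφpos : ∀ x, 0 < φ x)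
    (heq : ∀ x : ℝ, deriv (deriv φ) x + 2 * θ * deriv φ x
        + (θ ^ 2 + lam ^ 2 - c * lam + q x * lam + f'0) * φ x = K * φ x) :
    |K - (θ^2 + lam^2 - c*lam + f'0)| ≤ M * |lam| ∧
    (2*M*|lam| ≤ 1 → 0 ≤ K - (θ^2 + lam^2 - c*lam + f'0) ∧
      K - (θ^2 + lam^2 - c*lam + f'0)
        ≤ (2*M*Real.exp ((4*|θ|+1)*L)/(4*|θ|+1))^2 * lam^2) := by
  have hM0 : 0 ≤ M := le_trans (abs_nonneg _) (hM 0)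
  set m : ℝ := K - (θ^2 + lam^2 - c*lam + f'0) with hm_def
  -- Step 1: |m| ≤ M |lam| via max principle
  obtain ⟨x₁, hx₁⟩ := periodic_exists_max hL hφ.continuous hφper
  obtain ⟨x₀, hx₀⟩ := periodic_exists_min hL hφ.continuous hφper
  obtain ⟨h1max, h2max⟩ := deriv2_nonpos_at_max hφ hx₁
  obtain ⟨h1min, h2min⟩ := deriv2_nonneg_at_min hφ hx₀
  have habs : |m| ≤ M * |lam| := by
    have e₁ := heq x₁
    have e₀ := heq x₀
    rw [h1max] at e₁
    rw [h1min] at e₀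
    have hφ1 := hφpos x₁
    have hφ0 := hφpos x₀
    have hup : m ≤ q x₁ * lam := by nlinarith
    have hlo : q x₀ * lam ≤ m := by nlinarith
    rw [abs_le]
    constructor
    · have : |q x₀ * lam| ≤ M * |lam| := by
        rw [abs_mul]; exact mul_le_mul_of_nonneg_right (hM x₀) (abs_nonneg _)
      have := (abs_le.mp this).1
      linarith
    · have : |q x₁ * lam| ≤ M * |lam| := by
        rw [abs_mul]; exact mul_le_mul_of_nonneg_right (hM x₁) (abs_nonneg _)
      have := (abs_le.mp this).2
      linarith
  refine ⟨habs, fun hsmall => ?_⟩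
  -- differentiability facts
  have hφd : Differentiable ℝ φ := hφ.differentiable (by norm_num)
  have hφ1' : ContDiff ℝ 1 (deriv φ) := by
    rw [show (2 : WithTop ℕ∞) = 1 + 1 from by norm_num] at hφ
    exact (contDiff_succ_iff_deriv.mp hφ).2.2
  have hφ'd : Differentiable ℝ (deriv φ) := hφ1'.differentiable one_ne_zero
  set v : ℝ → ℝ := fun x => deriv φ x / φ x with hv_def
  have hφ'per : Function.Periodic (deriv φ) L := by
    intro x
    have h1 : deriv (fun y => φ (y + L)) x = deriv φ (x + L) :=
      deriv_comp_add_const φ L x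
    rw [← h1]
    congr 1
    funext y
    exact hφper y
  have hvper : Function.Periodic v L := fun x => by
    simp only [hv_def, hφ'per x, hφper x]
  have hvcont : Continuous v :=
    hφ1'.continuous.div hφ.continuous (fun x => (hφpos x).ne')
  have hv_deriv : ∀ x, HasDerivAt v (deriv (deriv φ) x / φ x - (v x)^2) x := by
    intro x
    have h := ((hφ'd x).hasDerivAt).div ((hφd x).hasDerivAt) (hφpos x).ne'
    refine h.congr_deriv ?_
    have hne := (hφpos x).ne'
    simp only [hv_def]
    field_simp [hv_def]
  have hveq : ∀ x, deriv v x
      = m - q x * lam - 2*θ*(v x) - (v x)^2 := by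
    intro x
    rw [(hv_deriv x).deriv]
    have e := heq x
    have hne := (hφpos x).ne'
    have hstep : deriv (deriv φ) x / φ x
        = K - (θ ^ 2 + lam ^ 2 - c * lam + q x * lam + f'0) - 2*θ*(v x) := by
      rw [div_eq_iff hne]
      simp only [hv_def]
      field_simp
      linarith [e]
    rw [hstep, hm_def]
    ring
  have hdvcont : Continuous (deriv v) := by
    have : deriv v = fun x => m - q x * lam - 2*θ*(v x) - (v x)^2 := funext hveq
    rw [this]
    fun_prop
  -- integral identities
  have hIdv : (∫ x in (0:ℝ)..L, deriv v x) = 0 := by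
    rw [intervalIntegral.integral_eq_sub_of_hasDerivAt
      (fun x _ => ((hv_deriv x).differentiableAt.hasDerivAt))
      (hdvcont.intervalIntegrable _ _)]
    have := hvper 0
    rw [zero_add] at this
    rw [this, sub_self]
  have hIv : (∫ x in (0:ℝ)..L, v x) = 0 := by
    rw [intervalIntegral.integral_eq_sub_of_hasDerivAt
      (f := fun y => Real.log (φ y)) (f' := v)
      (fun x _ => ((hφd x).hasDerivAt).log (hφpos x).ne')
      (hvcont.intervalIntegrable _ _)]
    have := hφper 0
    rw [zero_add] at this
    rw [this, sub_self]
  have hIv2 : (∫ x in (0:ℝ)..L, (v x)^2) = m * L := by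
    have hfe : ∀ x, (v x)^2 = m - q x * lam - 2*θ*(v x) - deriv v x := by
      intro x; rw [hveq x]; ring
    have hqint : IntervalIntegrable (fun x => q x * lam) MeasureTheory.volume 0 L :=
      (hq.mul continuous_const).intervalIntegrable _ _
    have hvint : IntervalIntegrable (fun x => 2*θ*(v x)) MeasureTheory.volume 0 L :=
      (continuous_const.mul hvcont).intervalIntegrable _ _
    have hdvint : IntervalIntegrable (deriv v) MeasureTheory.volume 0 L :=
      hdvcont.intervalIntegrable _ _
    have hmint : IntervalIntegrable (fun _ : ℝ => m) MeasureTheory.volume 0 L :=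
      intervalIntegrable_const
    calc (∫ x in (0:ℝ)..L, (v x)^2)
        = ∫ x in (0:ℝ)..L, (m - q x * lam - 2*θ*(v x) - deriv v x) :=
          intervalIntegral.integral_congr (fun x _ => hfe x)
      _ = (∫ x in (0:ℝ)..L, (m - q x * lam - 2*θ*(v x))) - ∫ x in (0:ℝ)..L, deriv v x :=
          intervalIntegral.integral_sub ((hmint.sub hqint).sub hvint) hdvint
      _ = m * L := by
          rw [hIdv, intervalIntegral.integral_sub (hmint.sub hqint) hvint,
            intervalIntegral.integral_sub hmint hqint,
            intervalIntegral.integral_const_mul, hIv,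
            intervalIntegral.integral_mul_const, hqmean,
            intervalIntegral.integral_const]
          simp [mul_comm]
  have hv2int : IntervalIntegrable (fun x => (v x)^2) MeasureTheory.volume 0 L :=
    (hvcont.pow 2).intervalIntegrable _ _
  have hmnonneg : 0 ≤ m := by
    have h0 : 0 ≤ ∫ x in (0:ℝ)..L, (v x)^2 :=
      intervalIntegral.integral_nonneg hL.le (fun x _ => sq_nonneg _)
    rw [hIv2] at h0
    nlinarith
  refine ⟨hmnonneg, ?_⟩
  -- Step 3: uniform bound on v
  obtain ⟨xM, hxM⟩ := periodic_exists_max hL hvcont hvper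
  obtain ⟨xm, hxm⟩ := periodic_exists_min hL hvcont hvper
  have hquad : ∀ z : ℝ, deriv v z = 0 → |v z| ≤ 2*|θ| + 1 := by
    intro z hz
    have h := hveq z
    rw [hz] at h
    have hb : (v z)^2 + 2*θ*(v z) = m - q z * lam := by linarith
    have hbr : |m - q z * lam| ≤ 2*M*|lam| := by
      have h1 := abs_le.mp habs
      have h2 : |q z * lam| ≤ M * |lam| := by
        rw [abs_mul]; exact mul_le_mul_of_nonneg_right (hM z) (abs_nonneg _)
      have h2' := abs_le.mp h2
      rw [abs_le]; constructor <;> [linarith [h1.1, h2'.2]; linarith [h1.2, h2'.1]]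
    have := abs_le_of_quad hb hbr
    have hsq : Real.sqrt (2*M*|lam|) ≤ 1 := by
      rw [show (1:ℝ) = Real.sqrt 1 from (Real.sqrt_one).symm]
      exact Real.sqrt_le_sqrt hsmall
    linarith
  have hMax : |v xM| ≤ 2*|θ| + 1 :=
    hquad xM (IsLocalMax.deriv_eq_zero (Filter.Eventually.of_forall hxM))
  have hMin : |v xm| ≤ 2*|θ| + 1 :=
    hquad xm (IsLocalMin.deriv_eq_zero (Filter.Eventually.of_forall hxm))
  have hB : ∀ x, |v x| ≤ 2*|θ| + 1 := by
    intro x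
    rw [abs_le]
    constructor
    · linarith [(abs_le.mp hMin).1, hxm x]
    · linarith [(abs_le.mp hMax).2, hxM x]
  -- Step 4: zero of v
  have hvm0 : v xm ≤ 0 := by
    by_contra hcontra
    push_neg at hcontra
    have hmono : (∫ x in (0:ℝ)..L, v xm) ≤ ∫ x in (0:ℝ)..L, v x :=
      intervalIntegral.integral_mono_on hL.le intervalIntegrable_const
        (hvcont.intervalIntegrable _ _) (fun x _ => hxm x)
    rw [hIv, intervalIntegral.integral_const] at hmono
    simp at hmono
    nlinarith
  have hvM0 : 0 ≤ v xM := by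
    by_contra hcontra
    push_neg at hcontra
    have hmono : (∫ x in (0:ℝ)..L, v x) ≤ ∫ x in (0:ℝ)..L, v xM :=
      intervalIntegral.integral_mono_on hL.le (hvcont.intervalIntegrable _ _)
        intervalIntegrable_const (fun x _ => hxM x)
    rw [hIv, intervalIntegral.integral_const] at hmono
    simp at hmono
    nlinarith
  obtain ⟨x₂, hx₂⟩ : ∃ t : ℝ, v t = 0 := by
    have hsub := intermediate_value_uIcc (a := xm) (b := xM) (f := v) hvcont.continuousOn
    have h0 : (0:ℝ) ∈ uIcc (v xm) (v xM) := by
      rw [Set.mem_uIcc]; left; exact ⟨hvm0, hvM0⟩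
    obtain ⟨t, _, ht⟩ := hsub h0
    exact ⟨t, ht⟩
  -- Step 5: Gronwall
  set Kg : ℝ := 4*|θ| + 1 with hKg_def
  have hKgpos : 0 < Kg := by positivity
  set ε : ℝ := 2*M*|lam| with hε_def
  have hεnn : 0 ≤ ε := by positivity
  have hgron := norm_le_gronwallBound_of_norm_deriv_right_le
    (f := v) (f' := deriv v) (δ := 0) (K := Kg) (ε := ε) (a := x₂) (b := x₂ + L)
    hvcont.continuousOn
    (fun x _ => ((hv_deriv x).differentiableAt.hasDerivAt).hasDerivWithinAt)
    (by simp [hx₂])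
    (fun x _ => by
      have tri : ∀ a b : ℝ, |a - b| ≤ |a| + |b| := fun a b => by
        rw [sub_eq_add_neg]
        exact (abs_add_le a (-b)).trans_eq (by rw [abs_neg])
      have h2 : |q x * lam| ≤ M * |lam| := by
        rw [abs_mul]; exact mul_le_mul_of_nonneg_right (hM x) (abs_nonneg _)
      have h3 : |(v x)^2| ≤ (2*|θ| + 1) * |v x| := by
        have h := hB x
        have : |(v x)^2| = |v x| * |v x| := by rw [abs_pow, sq, ← abs_mul, abs_mul]
        rw [this]
        nlinarith [abs_nonneg (v x)]
      have h6 : |2*θ*(v x)| = 2 * |θ| * |v x| := by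
        rw [abs_mul, abs_mul]
        norm_num
      show ‖deriv v x‖ ≤ Kg * ‖v x‖ + ε
      rw [Real.norm_eq_abs, Real.norm_eq_abs, hveq x]
      calc |m - q x * lam - 2*θ*(v x) - (v x)^2|
          ≤ |m - q x * lam - 2*θ*(v x)| + |(v x)^2| := tri _ _
        _ ≤ (|m - q x * lam| + |2*θ*(v x)|) + |(v x)^2| := by
            linarith [tri (m - q x * lam) (2*θ*(v x))]
        _ ≤ ((|m| + |q x * lam|) + |2*θ*(v x)|) + |(v x)^2| := by
            linarith [tri m (q x * lam)]
        _ ≤ Kg * |v x| + ε := by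
            rw [h6]
            simp only [hKg_def, hε_def]
            linarith [habs, h2, h3]
      )
  set D : ℝ := 2*M*Real.exp (Kg*L)/Kg with hD_def
  have hDnn : 0 ≤ D := by positivity
  have hvb : ∀ x, |v x| ≤ D * |lam| := by
    have hicc : ∀ y ∈ Icc x₂ (x₂ + L), |v y| ≤ D * |lam| := by
      intro y hy
      have h1 := hgron y hy
      rw [Real.norm_eq_abs] at h1
      rw [gronwallBound_of_K_ne_0 hKgpos.ne'] at h1
      simp only [zero_mul, zero_add] at h1
      have hexp : Real.exp (Kg * (y - x₂)) ≤ Real.exp (Kg * L) :=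
        Real.exp_le_exp.mpr (by nlinarith [hy.1, hy.2])
      have h2 : ε / Kg * (Real.exp (Kg * (y - x₂)) - 1) ≤ ε / Kg * Real.exp (Kg * L) := by
        apply mul_le_mul_of_nonneg_left _ (by positivity)
        linarith
      have : ε / Kg * Real.exp (Kg * L) = D * |lam| := by
        rw [hD_def, hε_def]
        field_simp
      linarith
    intro x
    obtain ⟨y, hy, hxy⟩ := hvper.exists_mem_Ico hL x x₂
    rw [hxy]
    exact hicc y (Ico_subset_Icc_self hy)
  have hfinal : m * L ≤ (D * |lam|)^2 * L := by
    have hmono : (∫ x in (0:ℝ)..L, (v x)^2) ≤ ∫ _x in (0:ℝ)..L, (D * |lam|)^2 :=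
      intervalIntegral.integral_mono_on hL.le hv2int intervalIntegrable_const
        (fun x _ => by
          have := hvb x
          calc (v x)^2 = |v x|^2 := (sq_abs _).symm
            _ ≤ (D * |lam|)^2 := by nlinarith [abs_nonneg (v x)])
    rw [hIv2, intervalIntegral.integral_const] at hmono
    simp at hmono
    nlinarith
  have hD2 : (D * |lam|)^2 = D^2 * lam^2 := by
    rw [mul_pow, sq_abs]
  rw [hD2] at hfinal
  rw [hD_def] at hfinal
  nlinarith

/-- For the family of periodic principal eigenvalue problems
L_{θ,λ} g = g'' + 2θ g' + (θ² + λ² − cλ + q(x)λ + f'(0)) g, with q continuous, L-periodic and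
of zero mean, one has k_θ(0) = θ² + f'(0) > 0 and (d k_θ/dλ)(0) = −c < 0. -/
theorem stmt5 (L c θ f'0 : ℝ) (hL : 0 < L) (hc : 0 < c) (hf'0 : 0 < f'0)
    (q : ℝ → ℝ) (hq : Continuous q) (hqper : Function.Periodic q L)
    (hqmean : (∫ x in (0:ℝ)..L, q x) = 0)
    (k : ℝ → ℝ)
    (heig : ∀ lam : ℝ, ∃ φ : ℝ → ℝ, ContDiff ℝ 2 φ ∧ Function.Periodic φ L ∧
      (∀ x : ℝ, 0 < φ x) ∧
      ∀ x : ℝ, deriv (deriv φ) x + 2 * θ * deriv φ x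
        + (θ ^ 2 + lam ^ 2 - c * lam + q x * lam + f'0) * φ x = k lam * φ x) :
    k 0 = θ ^ 2 + f'0 ∧ 0 < k 0 ∧ HasDerivAt k (-c) 0 ∧ -c < 0 := by
  obtain ⟨xq, hxq⟩ := periodic_exists_max hL hq.abs (fun x => by simp [hqper x])
  set M : ℝ := |q xq| with hM_def
  have hM : ∀ x, |q x| ≤ M := hxq
  have hM0 : 0 ≤ M := abs_nonneg _
  have key : ∀ lam : ℝ,
      |k lam - (θ^2 + lam^2 - c*lam + f'0)| ≤ M * |lam| ∧
      (2*M*|lam| ≤ 1 → 0 ≤ k lam - (θ^2 + lam^2 - c*lam + f'0) ∧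
        k lam - (θ^2 + lam^2 - c*lam + f'0)
          ≤ (2*M*Real.exp ((4*|θ|+1)*L)/(4*|θ|+1))^2 * lam^2) := by
    intro lam
    obtain ⟨φ, hφ, hφper, hφpos, heq⟩ := heig lam
    exact key_lemma L c θ f'0 lam M (k lam) hL q hq hqmean hM φ hφ hφper hφpos heq
  have h0 : k 0 = θ ^ 2 + f'0 := by
    have h := (key 0).1
    norm_num at h
    linarith
  set C : ℝ := (2*M*Real.exp ((4*|θ|+1)*L)/(4*|θ|+1))^2 with hC_def
  have hC0 : 0 ≤ C := sq_nonneg _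
  have hδ : (0:ℝ) < 1/(2*M+1) := by positivity
  have hquad : ∀ lam : ℝ, |lam| ≤ 1/(2*M+1) →
      |k lam - k 0 - (lam - 0) * (-c)| ≤ (1+C) * lam^2 := by
    intro lam hlam
    have hsm : 2*M*|lam| ≤ 1 := by
      have h1 : (0:ℝ) < 2*M+1 := by linarith
      have h2 : 2*M*|lam| ≤ 2*M*(1/(2*M+1)) :=
        mul_le_mul_of_nonneg_left hlam (by linarith)
      have h3 : 2*M*(1/(2*M+1)) ≤ 1 := by
        rw [mul_one_div, div_le_one h1]; linarith
      linarith
    obtain ⟨hm0, hmle⟩ := (key lam).2 hsm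
    have heq2 : k lam - k 0 - (lam - 0) * (-c)
        = lam^2 + (k lam - (θ^2 + lam^2 - c*lam + f'0)) := by
      rw [h0]; ring
    rw [heq2, abs_of_nonneg (by nlinarith [sq_nonneg lam])]
    nlinarith [sq_nonneg lam]
  have hderiv : HasDerivAt k (-c) 0 := by
    rw [hasDerivAt_iff_isLittleO]
    have hev : ∀ᶠ x : ℝ in 𝓝 0, |x| ≤ 1/(2*M+1) := by
      filter_upwards [Metric.ball_mem_nhds (0:ℝ) hδ] with x hx
      rw [Metric.mem_ball, Real.dist_eq, sub_zero] at hx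
      exact hx.le
    have hbig : (fun x : ℝ => k x - k 0 - (x - 0) • (-c)) =O[𝓝 0] (fun x => x^2) := by
      rw [Asymptotics.isBigO_iff]
      refine ⟨1+C, ?_⟩
      filter_upwards [hev] with x hx
      rw [Real.norm_eq_abs, Real.norm_eq_abs, smul_eq_mul, abs_pow]
      calc |k x - k 0 - (x - 0) * (-c)| ≤ (1+C) * x^2 := hquad x hx
        _ = (1+C) * |x|^2 := by rw [sq_abs]
    have hlit : (fun x : ℝ => x^2) =o[𝓝 0] (fun x => x - 0) := by
      simp only [sub_zero]
      rw [Asymptotics.isLittleO_iff]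
      intro ε hε
      have : ∀ᶠ x : ℝ in 𝓝 0, |x| ≤ ε := by
        filter_upwards [Metric.ball_mem_nhds (0:ℝ) hε] with x hx
        rw [Metric.mem_ball, Real.dist_eq, sub_zero] at hx
        exact hx.le
      filter_upwards [this] with x hx
      rw [Real.norm_eq_abs, Real.norm_eq_abs, abs_pow, sq]
      exact mul_le_mul_of_nonneg_right hx (abs_nonneg x)
    exact hbig.trans_isLittleO hlit
  exact ⟨h0, by rw [h0]; positivity, hderiv, by linarith⟩
end

section
/- Let ψ : ℝ → ℝ be a positive C² solution of ψ''(x) + a(x) ψ(x) = 0 on ℝ where a is continuous and L-periodic, and suppose there exists K > 0 with |ψ'(x)| ≤ K ψ(x) for all x. If the infimum μ = inf_{x ∈ ℝ} ψ(x+L)/ψ(x) is attained in the limit along some sequence and ψ∞ is any locally uniform limit of the normalized translates ψ(·+x_n)/ψ(x_n) with ψ(x_n+L)/ψ(x_n) → μ, then ψ∞(x+L) = μ ψ∞(x) for all x ∈ ℝ; consequently ψ∞(x) = e^{θx} φ(x) with θ = L⁻¹ log μ and φ positive and L-periodic. -/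
open Filter Real Set


/-- Limit of normalized translates of a positive solution of ψ'' + aψ = 0 along a minimizing
sequence of the period-ratio: any locally uniform limit ψi satisfies ψi(x+L) = μ ψi(x) and is of
the form e^{θx}φ(x) with θ = L⁻¹ log μ and φ positive L-periodic. -/
theorem stmt7 (L K μ : ℝ) (hL : 0 < L) (hK : 0 < K)
    (a ψ ψi : ℝ → ℝ) (ha : Continuous a) (haper : Function.Periodic a L)
    (hψreg : ContDiff ℝ 2 ψ) (hψpos : ∀ x : ℝ, 0 < ψ x)
    (hode : ∀ x : ℝ, deriv (deriv ψ) x + a x * ψ x = 0)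
    (hbound : ∀ x : ℝ, |deriv ψ x| ≤ K * ψ x)
    (hμ : μ = ⨅ x : ℝ, ψ (x + L) / ψ x)
    (xs : ℕ → ℝ)
    (hxs : Filter.Tendsto (fun n => ψ (xs n + L) / ψ (xs n)) Filter.atTop (nhds μ))
    (hlim : TendstoLocallyUniformly (fun n => fun t : ℝ => ψ (t + xs n) / ψ (xs n)) ψi
      Filter.atTop) :
    (∀ x : ℝ, ψi (x + L) = μ * ψi x) ∧
      ∃ φ : ℝ → ℝ, (∀ x : ℝ, 0 < φ x) ∧ Function.Periodic φ L ∧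
        ∀ x : ℝ, ψi x = Real.exp ((Real.log μ / L) * x) * φ x := by
  
  have hψd : Differentiable ℝ ψ := hψreg.differentiable (by norm_num)
  have h2 : ContDiff ℝ 1 (deriv ψ) := by
    have : ContDiff ℝ ((1 : ℕ) + 1) ψ := by exact_mod_cast hψreg
    exact (contDiff_succ_iff_deriv.mp this).2.2
  have hψ'd : Differentiable ℝ (deriv ψ) := h2.differentiable (by norm_num)
  have hψ'c : Continuous (deriv ψ) := h2.continuous
  -- u = ψ'/ψ
  set u : ℝ → ℝ := fun x => deriv ψ x / ψ x with hu_def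
  have hψne : ∀ x, ψ x ≠ 0 := fun x => (hψpos x).ne'
  have huc : Continuous u := hψ'c.div hψd.continuous hψne
  have hu : ∀ x, HasDerivAt u (-a x - u x ^ 2) x := by
    intro x
    have h1 : HasDerivAt (deriv ψ) (deriv (deriv ψ) x) x := (hψ'd x).hasDerivAt
    have h2' : HasDerivAt ψ (deriv ψ x) x := (hψd x).hasDerivAt
    have := h1.div h2' (hψne x)
    refine this.congr_deriv (Eq.symm ?_)
    have hode' : deriv (deriv ψ) x = -(a x * ψ x) := by linarith [hode x]
    rw [hode', hu_def]
    rw [div_pow, eq_div_iff (pow_ne_zero 2 (hψne x)), sub_mul,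
      div_mul_cancel₀ _ (pow_ne_zero 2 (hψne x))]
    ring
  -- w and s
  set w : ℝ → ℝ := fun x => u (x + L) - u x with hw_def
  set sfun : ℝ → ℝ := fun x => u (x + L) + u x with hs_def
  have hsc : Continuous sfun := (huc.comp (continuous_id.add continuous_const)).add huc
  have huL : ∀ x : ℝ, HasDerivAt (fun y => u (y + L)) (-a (x + L) - u (x + L) ^ 2) x := by
    intro x
    have h1 : HasDerivAt (fun y : ℝ => y + L) 1 x := (hasDerivAt_id x).add_const L
    have := (hu (x + L)).comp x h1
    exact this.congr_deriv (by simp)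
  have hw : ∀ x, HasDerivAt w (-sfun x * w x) x := by
    intro x
    have := (huL x).sub (hu x)
    refine this.congr_deriv (Eq.symm ?_)
    have hap : a (x + L) = a x := haper x
    rw [hs_def, hw_def, hap]
    ring
  -- integrating factor
  set g : ℝ → ℝ := fun x => ∫ t in (0:ℝ)..x, sfun t with hg_def
  have hg : ∀ x, HasDerivAt g (sfun x) x := by
    intro x
    exact intervalIntegral.integral_hasDerivAt_right (hsc.intervalIntegrable 0 x)
      (hsc.stronglyMeasurable.stronglyMeasurableAtFilter) hsc.continuousAt
  have hWconst : ∀ x, w x * Real.exp (g x) = w 0 := by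
    intro x
    have hW : ∀ y, HasDerivAt (fun z => w z * Real.exp (g z)) 0 y := by
      intro y
      have := (hw y).mul ((hg y).exp)
      refine this.congr_deriv (Eq.symm ?_)
      ring
    have hconst := is_const_of_deriv_eq_zero (𝕜 := ℝ)
      (f := fun z => w z * Real.exp (g z))
      (fun y => (hW y).differentiableAt) (fun y => (hW y).deriv) x 0
    have hg0 : g 0 = 0 := by simp [hg_def]
    simpa [hg0] using hconst
  have hwsign : ∀ x, w x = w 0 / Real.exp (g x) := fun x =>
    (eq_div_iff (Real.exp_ne_zero _)).mpr (hWconst x)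
  -- F and its derivative
  set F : ℝ → ℝ := fun x => ψ (x + L) / ψ x with hF_def
  have hFpos : ∀ x, 0 < F x := fun x => div_pos (hψpos _) (hψpos _)
  have hψL : ∀ x : ℝ, HasDerivAt (fun y => ψ (y + L)) (deriv ψ (x + L)) x := by
    intro x
    have h1 : HasDerivAt (fun y : ℝ => y + L) 1 x := (hasDerivAt_id x).add_const L
    have := (hψd (x + L)).hasDerivAt.comp x h1
    exact this.congr_deriv (by simp)
  have hF : ∀ x, HasDerivAt F (F x * w x) x := by
    intro x
    have := (hψL x).div (hψd x).hasDerivAt (hψne x)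
    refine this.congr_deriv (Eq.symm ?_)
    rw [hF_def, hw_def, hu_def]
    field_simp [hψne x, hψne (x + L)]
  -- Harnack inequality from the gradient bound
  have hlog : ∀ x, HasDerivAt (fun t => Real.log (ψ t)) (u x) x := fun x =>
    (hψd x).hasDerivAt.log (hψne x)
  have huK : ∀ x, |u x| ≤ K := by
    intro x
    rw [hu_def]
    rw [abs_div, abs_of_pos (hψpos x), div_le_iff₀ (hψpos x)]
    exact hbound x
  have hlip : LipschitzWith ⟨K, hK.le⟩ (fun t => Real.log (ψ t)) := by
    apply lipschitzWith_of_nnnorm_deriv_le (fun x => (hlog x).differentiableAt)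
    intro x
    rw [(hlog x).deriv]
    apply NNReal.coe_le_coe.mp
    rw [coe_nnnorm, Real.norm_eq_abs]
    exact huK x
  have harnack : ∀ x y : ℝ, ψ x * Real.exp (-(K * |y - x|)) ≤ ψ y := by
    intro x y
    have h1 := hlip.dist_le_mul y x
    rw [Real.dist_eq, Real.dist_eq] at h1
    have h2 : Real.log (ψ x) - K * |y - x| ≤ Real.log (ψ y) := by
      have := abs_sub_abs_le_abs_sub (Real.log (ψ y)) (Real.log (ψ x))
      have h3 : Real.log (ψ x) - Real.log (ψ y) ≤ K * |y - x| := by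
        calc Real.log (ψ x) - Real.log (ψ y) ≤ |Real.log (ψ y) - Real.log (ψ x)| := by
              rw [abs_sub_comm]; exact le_abs_self _
          _ ≤ K * |y - x| := h1
      linarith
    calc ψ x * Real.exp (-(K * |y - x|))
        = Real.exp (Real.log (ψ x) - K * |y - x|) := by
          rw [Real.exp_sub, Real.exp_log (hψpos x)]
          rw [Real.exp_neg]
          ring
      _ ≤ Real.exp (Real.log (ψ y)) := Real.exp_le_exp.2 h2
      _ = ψ y := Real.exp_log (hψpos y)
  have Flb : ∀ x, Real.exp (-(K * L)) ≤ F x := by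
    intro x
    rw [hF_def]
    rw [le_div_iff₀ (hψpos x)]
    have := harnack x (x + L)
    have hL' : |x + L - x| = L := by
      rw [show x + L - x = L by ring, abs_of_pos hL]
    rw [hL'] at this
    linarith
  have bdd : BddBelow (Set.range F) := ⟨Real.exp (-(K * L)), by
    rintro y ⟨x, rfl⟩; exact Flb x⟩
  have hμle : ∀ x, μ ≤ F x := by
    intro x; rw [hμ]; exact ciInf_le bdd x
  have μlb : Real.exp (-(K * L)) ≤ μ := by
    rw [hμ]; exact le_ciInf Flb
  have μpos : 0 < μ := lt_of_lt_of_le (Real.exp_pos _) μlb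
  -- pointwise convergence
  have hpt : ∀ t : ℝ, Tendsto (fun n => ψ (t + xs n) / ψ (xs n)) atTop (nhds (ψi t)) :=
    fun t => (tendstoLocallyUniformlyOn_univ.2 hlim).tendsto_at (Set.mem_univ t)
  -- key : F (x + xs n) → μ
  have key : ∀ x : ℝ, Tendsto (fun n => F (x + xs n)) atTop (nhds μ) := by
    have hxsF : Tendsto (fun n => F (xs n)) atTop (nhds μ) := hxs
    rcases lt_trichotomy (w 0) 0 with h0 | h0 | h0
    · -- F strictly antitone; xs → +∞
      have hFanti : StrictAnti F := by
        apply strictAnti_of_deriv_neg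
        intro x
        rw [(hF x).deriv]
        exact mul_neg_of_pos_of_neg (hFpos x)
          (by rw [hwsign x]; exact div_neg_of_neg_of_pos h0 (Real.exp_pos _))
      have hxstop : Tendsto xs atTop atTop := by
        rw [tendsto_atTop]
        intro b
        have hb : μ < F b := lt_of_le_of_lt (hμle (b + 1)) (hFanti (lt_add_one b))
        filter_upwards [hxsF.eventually (gt_mem_nhds hb)] with n hn
        by_contra hcon
        push_neg at hcon
        exact absurd hn (not_lt.2 (hFanti.antitone hcon.le))
      intro x
      rw [tendsto_order]
      constructor
      · intro c hc
        exact Filter.Eventually.of_forall fun n => lt_of_lt_of_le hc (hμle _)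
      · intro c hc
        obtain ⟨n₀, hn₀⟩ := (hxsF.eventually (gt_mem_nhds hc)).exists
        filter_upwards [hxstop.eventually_ge_atTop (xs n₀ - x)] with n hn
        have : xs n₀ ≤ x + xs n := by linarith
        exact lt_of_le_of_lt (hFanti.antitone this) hn₀
    · -- F constant
      have hFc : ∀ x, F x = F 0 := by
        intro x
        exact is_const_of_deriv_eq_zero (𝕜 := ℝ) (f := F)
          (fun y => (hF y).differentiableAt)
          (fun y => by rw [(hF y).deriv, hwsign y, h0]; simp) x 0
      have hμF0 : μ = F 0 := by
        apply tendsto_nhds_unique hxsF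
        simp only [hFc]
        exact tendsto_const_nhds
      intro x
      have : (fun n => F (x + xs n)) = fun _ => μ := by
        funext n; rw [hFc, ← hμF0]
      rw [this]
      exact tendsto_const_nhds
    · -- F strictly monotone; xs → -∞
      have hFmono : StrictMono F := by
        apply strictMono_of_deriv_pos
        intro x
        rw [(hF x).deriv]
        exact mul_pos (hFpos x)
          (by rw [hwsign x]; exact div_pos h0 (Real.exp_pos _))
      have hxsbot : Tendsto xs atTop atBot := by
        rw [tendsto_atBot]
        intro b
        have hb : μ < F b := lt_of_le_of_lt (hμle (b - 1)) (hFmono (by linarith))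
        filter_upwards [hxsF.eventually (gt_mem_nhds hb)] with n hn
        by_contra hcon
        push_neg at hcon
        exact absurd hn (not_lt.2 (hFmono.monotone hcon.le))
      intro x
      rw [tendsto_order]
      constructor
      · intro c hc
        exact Filter.Eventually.of_forall fun n => lt_of_lt_of_le hc (hμle _)
      · intro c hc
        obtain ⟨n₀, hn₀⟩ := (hxsF.eventually (gt_mem_nhds hc)).exists
        filter_upwards [hxsbot.eventually_le_atBot (xs n₀ - x)] with n hn
        have : x + xs n ≤ xs n₀ := by linarith
        exact lt_of_le_of_lt (hFmono.monotone this) hn₀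
  -- part 1
  have part1 : ∀ x : ℝ, ψi (x + L) = μ * ψi x := by
    intro x
    have t1 : Tendsto (fun n => ψ (x + L + xs n) / ψ (xs n)) atTop (nhds (ψi (x + L))) :=
      hpt (x + L)
    have t2 : Tendsto (fun n => F (x + xs n) * (ψ (x + xs n) / ψ (xs n))) atTop
        (nhds (μ * ψi x)) := (key x).mul (hpt x)
    have hfe : ∀ n, ψ (x + L + xs n) / ψ (xs n) =
        F (x + xs n) * (ψ (x + xs n) / ψ (xs n)) := by
      intro n
      rw [hF_def]
      have hxx : x + L + xs n = x + xs n + L := by ring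
      rw [hxx]
      field_simp
      exact (mul_div_mul_left (ψ (x + xs n + L)) (ψ (xs n)) (hψne (x + xs n))).symm.trans (by ring)
    exact tendsto_nhds_unique ((tendsto_congr hfe).mp t1) t2
  -- positivity of ψi
  have ψipos : ∀ x, 0 < ψi x := by
    intro x
    have lb : ∀ n, Real.exp (-(K * |x|)) ≤ ψ (x + xs n) / ψ (xs n) := by
      intro n
      rw [le_div_iff₀ (hψpos (xs n))]
      have := harnack (xs n) (x + xs n)
      have hxx : |x + xs n - xs n| = |x| := by rw [show x + xs n - xs n = x by ring]
      rw [hxx] at this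
      linarith
    have := le_of_tendsto_of_tendsto tendsto_const_nhds (hpt x)
      (Filter.Eventually.of_forall lb)
    exact lt_of_lt_of_le (Real.exp_pos _) this
  refine ⟨part1, fun x => Real.exp (-(Real.log μ / L * x)) * ψi x,
    fun x => mul_pos (Real.exp_pos _) (ψipos x), ?_, ?_⟩
  · intro x
    simp only
    rw [part1 x]
    have hθL : Real.log μ / L * L = Real.log μ := div_mul_cancel₀ _ hL.ne'
    rw [show -(Real.log μ / L * (x + L)) = -(Real.log μ / L * x) + -(Real.log μ / L * L) by
      ring, Real.exp_add, hθL, Real.exp_neg (Real.log μ), Real.exp_log μpos]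
    field_simp [μpos.ne']
  · intro x
    simp only
    rw [← mul_assoc, ← Real.exp_add]
    simp
end

section
/- Let α, β ∈ (0, π), let q be continuous L-periodic, c ∈ ℝ, f Lipschitz with f ≥ 0 on [0,1] and f(0)=0, and let φ be a C² solution of Δφ + (q(x)−c)∂_yφ + f(φ) = 0 on ℝ² with 0 ≤ φ ≤ 1 satisfying the conical conditions: sup over C⁻_{α,β,l} of φ → 0 as l → −∞ and inf over C⁺_{α,β,l} of φ → 1 as l → +∞. Then for every l ∈ ℝ, inf_{(x,y) ∈ C⁺_{α,β,l}} φ(x,y) > 0. -/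
open Real Set Filter Topology

/-- The lower cone C⁻_{α,β,l}. -/
def Cminus (α β l : ℝ) : Set (ℝ × ℝ) :=
  {p | (p.1 ≤ 0 → p.2 ≤ p.1 * (Real.cos α / Real.sin α) + l) ∧
       (0 ≤ p.1 → p.2 ≤ -p.1 * (Real.cos β / Real.sin β) + l)}

/-- The upper cone C⁺_{α,β,l}. -/
def Cplus (α β l : ℝ) : Set (ℝ × ℝ) := closure (Cminus α β l)ᶜ

/-- Second derivative test direction: at a local min, the second derivative is nonneg. -/
lemma second_nonneg_of_localmin {g g' : ℝ → ℝ} {a c : ℝ}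
    (hg : ∀ x, HasDerivAt g (g' x) x) (hg' : HasDerivAt g' c a)
    (hmin : IsLocalMin g a) : 0 ≤ c := by
  by_contra hc
  push_neg at hc
  have hga : g' a = 0 := by
    have := hmin.deriv_eq_zero
    rwa [(hg a).deriv] at this
  -- slope of g' tends to c < 0, so g' is negative just to the right of a
  have hslope : Tendsto (slope g' a) (𝓝[≠] a) (𝓝 c) :=
    hasDerivAt_iff_tendsto_slope.mp hg'
  have hev : ∀ᶠ x in 𝓝[>] a, slope g' a x < c / 2 := by
    have h1 : ∀ᶠ x in 𝓝[≠] a, slope g' a x < c / 2 :=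
      hslope.eventually_lt_const (by linarith)
    exact h1.filter_mono (nhdsWithin_mono a fun x hx => ne_of_gt hx)
  have hev' : ∀ᶠ x in 𝓝[>] a, g' x < 0 := by
    filter_upwards [hev, self_mem_nhdsWithin] with x hx hxa
    have hxa' : (0:ℝ) < x - a := by simpa [mem_Ioi] using sub_pos.mpr (mem_Ioi.mp hxa)
    rw [slope_def_field] at hx
    have h2 : g' x - g' a < c / 2 * (x - a) := (div_lt_iff₀ hxa').mp hx
    nlinarith [hga]
  -- extract an interval (a, b) where g' < 0
  obtain ⟨b, hb, hball⟩ : ∃ b, a < b ∧ ∀ x ∈ Ioo a b, g' x < 0 := by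
    rcases (eventually_nhdsWithin_iff.mp hev').exists_mem with ⟨u, hu, hu'⟩
    rcases mem_nhds_iff_exists_Ioo_subset.mp hu with ⟨lo, hi, hmem, hsub⟩
    exact ⟨hi, hmem.2, fun x hx => hu' x (hsub ⟨lt_trans hmem.1 hx.1, hx.2⟩) hx.1⟩
  -- local min gives g a ≤ g x near a
  rcases Metric.eventually_nhds_iff.mp hmin with ⟨δ, hδ, hδ'⟩
  set x := min b (a + δ / 2)
  have hax : a < x := lt_min hb (by linarith)
  have hmono : StrictAntiOn g (Icc a x) := by
    apply strictAntiOn_of_deriv_neg (convex_Icc a x)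
    · exact fun t _ => (hg t).differentiableAt.continuousAt.continuousWithinAt
    · intro t ht
      rw [interior_Icc] at ht
      rw [(hg t).deriv]
      exact hball t ⟨ht.1, lt_of_lt_of_le ht.2 (min_le_left _ _)⟩
  have h1 : g x < g a := hmono (left_mem_Icc.mpr hax.le) (right_mem_Icc.mpr hax.le) hax
  have h2 : g a ≤ g x := by
    apply hδ'
    have : |x - a| < δ := by
      rw [abs_of_pos (by linarith)]
      have : x ≤ a + δ / 2 := min_le_right _ _
      linarith
    simpa [Real.dist_eq] using this
  linarith

section plumbing
variable {φ : ℝ → ℝ → ℝ}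

lemma sliceX_contDiff (hreg : ContDiff ℝ 2 (fun p : ℝ × ℝ => φ p.1 p.2)) (y : ℝ) : ContDiff ℝ 2 (fun s : ℝ => φ s y) :=
  hreg.comp (contDiff_id.prodMk contDiff_const)

lemma sliceY_contDiff (hreg : ContDiff ℝ 2 (fun p : ℝ × ℝ => φ p.1 p.2)) (x : ℝ) : ContDiff ℝ 2 (fun s : ℝ => φ x s) :=
  hreg.comp (contDiff_const.prodMk contDiff_id)

lemma hasDerivAt_dX (hreg : ContDiff ℝ 2 (fun p : ℝ × ℝ => φ p.1 p.2)) (x y : ℝ) : HasDerivAt (fun s => φ s y) (dX φ x y) x :=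
  (((sliceX_contDiff hreg y).differentiable (by norm_num)) x).hasDerivAt

lemma hasDerivAt_dY (hreg : ContDiff ℝ 2 (fun p : ℝ × ℝ => φ p.1 p.2)) (x y : ℝ) : HasDerivAt (fun s => φ x s) (dY φ x y) y :=
  (((sliceY_contDiff hreg x).differentiable (by norm_num)) y).hasDerivAt

lemma dX_eq_fderiv (hreg : ContDiff ℝ 2 (fun p : ℝ × ℝ => φ p.1 p.2)) (x y : ℝ) :
    dX φ x y = fderiv ℝ (fun p : ℝ × ℝ => φ p.1 p.2) (x, y) (1, 0) := by
  have h1 : HasDerivAt (fun s : ℝ => (s, y)) ((1:ℝ), (0:ℝ)) x :=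
    (hasDerivAt_id x).prodMk (hasDerivAt_const x y)
  have h2 := ((hreg.differentiable (by norm_num)) (x, y)).hasFDerivAt
  have h3 : HasDerivAt (fun s => φ s y)
      (fderiv ℝ (fun p : ℝ × ℝ => φ p.1 p.2) (x, y) (1, 0)) x :=
    HasFDerivAt.comp_hasDerivAt (l := fun p : ℝ × ℝ => φ p.1 p.2) (x := x) h2 h1
  exact ((hasDerivAt_dX hreg x y).unique h3)

lemma dY_eq_fderiv (hreg : ContDiff ℝ 2 (fun p : ℝ × ℝ => φ p.1 p.2)) (x y : ℝ) :
    dY φ x y = fderiv ℝ (fun p : ℝ × ℝ => φ p.1 p.2) (x, y) (0, 1) := by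
  have h1 : HasDerivAt (fun s : ℝ => (x, s)) ((0:ℝ), (1:ℝ)) y :=
    (hasDerivAt_const y x).prodMk (hasDerivAt_id y)
  have h2 := ((hreg.differentiable (by norm_num)) (x, y)).hasFDerivAt
  have h3 : HasDerivAt (fun s => φ x s)
      (fderiv ℝ (fun p : ℝ × ℝ => φ p.1 p.2) (x, y) (0, 1)) y :=
    h2.comp_hasDerivAt (x := y) h1
  exact ((hasDerivAt_dY hreg x y).unique h3)

lemma contDiff_fderiv_apply (hreg : ContDiff ℝ 2 (fun p : ℝ × ℝ => φ p.1 p.2)) (v : ℝ × ℝ) :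
    ContDiff ℝ 1 (fun p : ℝ × ℝ => fderiv ℝ (fun p : ℝ × ℝ => φ p.1 p.2) p v) :=
  ((hreg.fderiv_right (by norm_num)).clm_apply contDiff_const)

lemma hasDerivAt_dXX (hreg : ContDiff ℝ 2 (fun p : ℝ × ℝ => φ p.1 p.2)) (x y : ℝ) :
    HasDerivAt (fun s => dX φ s y) (dX (dX φ) x y) x := by
  have hfun : (fun s => dX φ s y)
      = fun s => fderiv ℝ (fun p : ℝ × ℝ => φ p.1 p.2) (s, y) (1, 0) :=
    funext fun s => dX_eq_fderiv hreg s y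
  have hcd : ContDiff ℝ 1 (fun s : ℝ =>
      fderiv ℝ (fun p : ℝ × ℝ => φ p.1 p.2) (s, y) (1, 0)) :=
    (contDiff_fderiv_apply hreg (1, 0)).comp (contDiff_id.prodMk contDiff_const)
  have hd : DifferentiableAt ℝ (fun s => dX φ s y) x := by
    rw [hfun]; exact (hcd.differentiable one_ne_zero) x
  exact hd.hasDerivAt

lemma hasDerivAt_dYY (hreg : ContDiff ℝ 2 (fun p : ℝ × ℝ => φ p.1 p.2)) (x y : ℝ) :
    HasDerivAt (fun s => dY φ x s) (dY (dY φ) x y) y := by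
  have hfun : (fun s => dY φ x s)
      = fun s => fderiv ℝ (fun p : ℝ × ℝ => φ p.1 p.2) (x, s) (0, 1) :=
    funext fun s => dY_eq_fderiv hreg x s
  have hcd : ContDiff ℝ 1 (fun s : ℝ =>
      fderiv ℝ (fun p : ℝ × ℝ => φ p.1 p.2) (x, s) (0, 1)) :=
    (contDiff_fderiv_apply hreg (0, 1)).comp (contDiff_const.prodMk contDiff_id)
  have hd : DifferentiableAt ℝ (fun s => dY φ x s) y := by
    rw [hfun]; exact (hcd.differentiable one_ne_zero) y
  exact hd.hasDerivAt

end plumbing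

lemma mem_Cplus_iff (α β l : ℝ) (p : ℝ × ℝ) :
    p ∈ Cplus α β l ↔
      (p.1 ≤ 0 ∧ p.1 * (Real.cos α / Real.sin α) + l ≤ p.2) ∨
      (0 ≤ p.1 ∧ -p.1 * (Real.cos β / Real.sin β) + l ≤ p.2) := by
  set cA := Real.cos α / Real.sin α
  set cB := Real.cos β / Real.sin β
  constructor
  · intro hp
    have hclosed : IsClosed {p : ℝ × ℝ |
        (p.1 ≤ 0 ∧ p.1 * cA + l ≤ p.2) ∨ (0 ≤ p.1 ∧ -p.1 * cB + l ≤ p.2)} := by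
      apply IsClosed.union
      · exact (isClosed_le continuous_fst continuous_const).inter
          (isClosed_le (by fun_prop) continuous_snd)
      · exact (isClosed_le continuous_const continuous_fst).inter
          (isClosed_le (by fun_prop) continuous_snd)
    have hsub : (Cminus α β l)ᶜ ⊆ {p : ℝ × ℝ |
        (p.1 ≤ 0 ∧ p.1 * cA + l ≤ p.2) ∨ (0 ≤ p.1 ∧ -p.1 * cB + l ≤ p.2)} := by
      intro q hq
      simp only [Cminus, mem_compl_iff, mem_setOf_eq, not_and_or, not_forall, not_le] at hq
      rcases hq with ⟨h1, h2⟩ | ⟨h1, h2⟩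
      · exact Or.inl ⟨h1, h2.le⟩
      · exact Or.inr ⟨h1, h2.le⟩
    exact closure_minimal hsub hclosed hp
  · intro hp
    rw [Cplus, Metric.mem_closure_iff]
    intro ε hε
    refine ⟨(p.1, p.2 + ε / 2), ?_, ?_⟩
    · simp only [Cminus, mem_compl_iff, mem_setOf_eq, not_and_or, not_forall, not_le]
      rcases hp with ⟨h1, h2⟩ | ⟨h1, h2⟩
      · exact Or.inl ⟨h1, by linarith⟩
      · exact Or.inr ⟨h1, by linarith⟩
    · have hd : dist p ((p.1, p.2 + ε / 2) : ℝ × ℝ) = ε / 2 := by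
        rw [Prod.dist_eq]
        have h1 : dist p.1 (p.1, p.2 + ε / 2).1 = 0 := by simp
        have h2 : dist p.2 (p.2 + ε / 2) = ε / 2 := by
          rw [Real.dist_eq, abs_sub_comm, add_sub_cancel_left, abs_of_nonneg (by linarith)]
        rw [h1, h2, max_eq_right (by linarith)]
      rw [hd]; linarith

lemma Cplus_mono (α β : ℝ) {l l' : ℝ} (h : l' ≤ l) : Cplus α β l ⊆ Cplus α β l' := by
  apply closure_mono
  intro p hp
  simp only [Cminus, mem_compl_iff, mem_setOf_eq, not_and_or, not_forall, not_le] at hp ⊢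
  rcases hp with ⟨h1, h2⟩ | ⟨h1, h2⟩
  · exact Or.inl ⟨h1, by linarith⟩
  · exact Or.inr ⟨h1, by linarith⟩

/-- Cone fact: moving up by `d + CX * |Δx|` from a point of `Cplus α β l`
lands in `Cplus α β (l + d)`. -/
lemma cone_fact (α β l d : ℝ) (hd : 0 ≤ d) (p q : ℝ × ℝ)
    (hp : p ∈ Cplus α β l)
    (hq : p.2 + d + max |Real.cos α / Real.sin α| |Real.cos β / Real.sin β| * |q.1 - p.1| ≤ q.2) :
    q ∈ Cplus α β (l + d) := by
  set cA := Real.cos α / Real.sin α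
  set cB := Real.cos β / Real.sin β
  set CX := max |cA| |cB| with hCX
  have hCA : |cA| ≤ CX := le_max_left _ _
  have hCB : |cB| ≤ CX := le_max_right _ _
  have habs1 : cA ≤ |cA| := le_abs_self _
  have habs2 : -|cA| ≤ cA := neg_abs_le _
  have habs3 : cB ≤ |cB| := le_abs_self _
  have habs4 : -|cB| ≤ cB := neg_abs_le _
  have habs5 : q.1 - p.1 ≤ |q.1 - p.1| := le_abs_self _
  have habs6 : -|q.1 - p.1| ≤ q.1 - p.1 := neg_abs_le _
  have habs7 : (0:ℝ) ≤ |q.1 - p.1| := abs_nonneg _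
  rw [mem_Cplus_iff] at hp ⊢
  rcases le_total q.1 0 with hq1 | hq1
  · refine Or.inl ⟨hq1, ?_⟩
    rcases hp with ⟨h1, h2⟩ | ⟨h1, h2⟩
    · -- p.1 ≤ 0, q.1 ≤ 0
      have : CX * |q.1 - p.1| ≥ cA * (q.1 - p.1) := by
        rcases le_total 0 (q.1 - p.1) with h | h
        · rw [abs_of_nonneg h]; nlinarith
        · rw [abs_of_nonpos h]; nlinarith
      nlinarith
    · -- 0 ≤ p.1, q.1 ≤ 0 so q.1 ≤ 0 ≤ p.1, |q.1-p.1| = p.1 - q.1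
      have hle : q.1 - p.1 ≤ 0 := by linarith
      rw [abs_of_nonpos hle] at hq
      -- need q.1*cA + l + d ≤ q.2 ; q.2 ≥ p.2 + d + CX*(p.1-q.1) ≥ -p.1*cB + l + d + CX*(p.1-q.1)
      nlinarith
  · refine Or.inr ⟨hq1, ?_⟩
    rcases hp with ⟨h1, h2⟩ | ⟨h1, h2⟩
    · have hle : 0 ≤ q.1 - p.1 := by linarith
      rw [abs_of_nonneg hle] at hq
      nlinarith
    · have : CX * |q.1 - p.1| ≥ -cB * (q.1 - p.1) := by
        rcases le_total 0 (q.1 - p.1) with h | h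
        · rw [abs_of_nonneg h]; nlinarith
        · rw [abs_of_nonpos h]; nlinarith
      nlinarith

set_option maxHeartbeats 1000000 in
/-- Barrier comparison on a rectangle: a lower bound `m` on the top edge propagates,
with factor `κ`, to the bottom-center point. -/
lemma step_lemma (φ : ℝ → ℝ → ℝ) (b : ℝ → ℝ) (M : ℝ) (hM : 0 ≤ M) (hb : ∀ x, |b x| ≤ M)
    (hDX : ∀ x y, HasDerivAt (fun s => φ s y) (dX φ x y) x)
    (hDXX : ∀ x y, HasDerivAt (fun s => dX φ s y) (dX (dX φ) x y) x)
    (hDY : ∀ x y, HasDerivAt (fun s => φ x s) (dY φ x y) y)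
    (hDYY : ∀ x y, HasDerivAt (fun s => dY φ x s) (dY (dY φ) x y) y)
    (hcont : Continuous (fun p : ℝ × ℝ => φ p.1 p.2))
    (hsup : ∀ x y, dX (dX φ) x y + dY (dY φ) x y + b x * dY φ x y ≤ 0)
    (hpos : ∀ x y, 0 ≤ φ x y)
    (T : ℝ) (hT : 1 ≤ T) (m : ℝ) (hm : 0 ≤ m) (px py : ℝ)
    (htop : ∀ x', |x' - px| ≤ 1 → m ≤ φ x' (py + T)) :
    m * ((Real.exp (M + π / 2) - 1) / (Real.exp ((M + π / 2) * (T + 1)) - 1)) ≤ φ px py := by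
  rcases eq_or_lt_of_le hm with h0 | hmpos
  · rw [← h0, zero_mul]; exact hpos px py
  set ω : ℝ := π / 2 with hωdef
  have hωpos : 0 < ω := by positivity
  set lam : ℝ := M + ω with hlamdef
  have hlampos : 0 < lam := by positivity
  have hlamω : ω ≤ lam := by linarith
  set k : ℝ := Real.exp (lam * (T + 1)) - 1 with hkdef
  have hkpos : 0 < k := by
    have : (0:ℝ) < lam * (T + 1) := by nlinarith
    simpa [hkdef] using sub_pos.mpr (Real.one_lt_exp_iff.mpr this)
  set ψ : ℝ → ℝ → ℝ :=
    fun x y => m / k * Real.cos (ω * (x - px)) * (Real.exp (lam * (y - py + 1)) - 1) with hψdef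
  set v : ℝ × ℝ → ℝ := fun p => φ p.1 p.2 - ψ p.1 p.2 with hvdef
  have hvcont : Continuous v := by
    apply hcont.sub
    fun_prop
  set Q : Set (ℝ × ℝ) := Icc (px - 1) (px + 1) ×ˢ Icc (py - 1) (py + T) with hQdef
  have hQc : IsCompact Q := isCompact_Icc.prod isCompact_Icc
  have hpQ : ((px, py) : ℝ × ℝ) ∈ Q := by
    constructor <;> constructor <;> simp <;> linarith
  obtain ⟨ps, hpsQ, hmin⟩ := hQc.exists_isMinOn ⟨(px, py), hpQ⟩ hvcont.continuousOn
  obtain ⟨⟨hx1, hx2⟩, hy1, hy2⟩ : (ps.1 ∈ Icc (px-1) (px+1)) ∧ ps.2 ∈ Icc (py-1) (py+T) := hpsQ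
  have key : 0 ≤ v ps := by
    rcases eq_or_lt_of_le hy2 with hytop | hy2'
    · -- top edge
      have hxd : |ps.1 - px| ≤ 1 := abs_le.mpr ⟨by linarith, by linarith⟩
      have hφ : m ≤ φ ps.1 ps.2 := by rw [hytop]; exact htop ps.1 hxd
      have hψle : ψ ps.1 ps.2 ≤ m := by
        rw [hψdef]
        simp only
        rw [hytop]
        have he : py + T - py + 1 = T + 1 := by ring
        rw [he]
        have : m / k * Real.cos (ω * (ps.1 - px)) * (Real.exp (lam * (T+1)) - 1)
            = m * Real.cos (ω * (ps.1 - px)) := by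
          field_simp [hkdef]
          rw [hkdef]; ring
        rw [this]
        calc m * Real.cos (ω * (ps.1 - px)) ≤ m * 1 :=
              mul_le_mul_of_nonneg_left (Real.cos_le_one _) hm
          _ = m := mul_one m
      simp only [hvdef]
      linarith
    rcases eq_or_lt_of_le hy1 with hybot | hy1'
    · -- bottom edge: ψ = 0
      have : ψ ps.1 ps.2 = 0 := by
        rw [hψdef]; simp only
        rw [← hybot]
        have : py - 1 - py + 1 = 0 := by ring
        rw [this, mul_zero, Real.exp_zero, sub_self, mul_zero]
      simp only [hvdef]
      rw [this, sub_zero]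
      exact hpos _ _
    rcases eq_or_lt_of_le hx1 with hxleft | hx1'
    · have : ψ ps.1 ps.2 = 0 := by
        rw [hψdef]; simp only
        rw [← hxleft]
        have h1 : ω * (px - 1 - px) = -(π/2) := by rw [hωdef]; ring
        rw [h1, Real.cos_neg, Real.cos_pi_div_two, mul_zero, zero_mul]
      simp only [hvdef]; rw [this, sub_zero]; exact hpos _ _
    rcases eq_or_lt_of_le hx2 with hxright | hx2'
    · have : ψ ps.1 ps.2 = 0 := by
        rw [hψdef]; simp only
        rw [hxright]
        have h1 : ω * (px + 1 - px) = π/2 := by rw [hωdef]; ring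
        rw [h1, Real.cos_pi_div_two, mul_zero, zero_mul]
      simp only [hvdef]; rw [this, sub_zero]; exact hpos _ _
    -- interior case
    exfalso
    set xs := ps.1 with hxs
    set ys := ps.2 with hys
    have hQnhds : Q ∈ 𝓝 ps := by
      rw [hQdef, ← @Prod.mk.eta _ _ ps]
      exact prod_mem_nhds (Icc_mem_nhds hx1' hx2') (Icc_mem_nhds hy1' hy2')
    have hlocal : IsLocalMin v ps := hmin.isLocalMin hQnhds
    set cosv : ℝ := Real.cos (ω * (xs - px)) with hcosv
    have hcosvpos : 0 < cosv := by
      apply Real.cos_pos_of_mem_Ioo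
      constructor
      · rw [hωdef]; nlinarith [Real.pi_pos]
      · rw [hωdef]; nlinarith [Real.pi_pos]
    set Ee : ℝ := Real.exp (lam * (ys - py + 1)) with hEe
    have hEe1 : 1 ≤ Ee := by
      have harg : 0 ≤ lam * (ys - py + 1) := by nlinarith
      rw [hEe]
      calc (1:ℝ) = Real.exp 0 := (Real.exp_zero).symm
        _ ≤ _ := Real.exp_le_exp.mpr harg
    set A : ℝ := m / k with hA
    have hApos : 0 < A := div_pos hmpos hkpos
    -- x-slice
    have hlocx : IsLocalMin (fun s => v (s, ys)) xs := by
      have := hlocal.comp_continuous (g := fun s : ℝ => (s, ys))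
        (continuous_id.prodMk continuous_const).continuousAt
      exact this
    have hψx : ∀ s : ℝ, HasDerivAt (fun u => ψ u ys)
        (A * (-Real.sin (ω * (s - px)) * ω) * (Ee - 1)) s := by
      intro s
      have hlin : HasDerivAt (fun u : ℝ => ω * (u - px)) ω s := by
        simpa using ((hasDerivAt_id s).sub_const px).const_mul ω
      exact ((hlin.cos.const_mul A).mul_const (Ee - 1))
    have hgx : ∀ s : ℝ, HasDerivAt (fun u => v (u, ys))
        (dX φ s ys - A * (-Real.sin (ω * (s - px)) * ω) * (Ee - 1)) s :=
      fun s => (hDX s ys).sub (hψx s)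
    have hψxx : HasDerivAt (fun s => dX φ s ys - A * (-Real.sin (ω * (s - px)) * ω) * (Ee - 1))
        (dX (dX φ) xs ys - A * (-(Real.cos (ω * (xs - px)) * ω) * ω) * (Ee - 1)) xs := by
      apply (hDXX xs ys).sub
      have hlin : HasDerivAt (fun u : ℝ => ω * (u - px)) ω xs := by
        simpa using ((hasDerivAt_id xs).sub_const px).const_mul ω
      exact ((hlin.sin.neg.mul_const ω).const_mul A).mul_const (Ee - 1)
    have hxx : 0 ≤ dX (dX φ) xs ys - A * (-(cosv * ω) * ω) * (Ee - 1) :=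
      second_nonneg_of_localmin hgx hψxx hlocx
    -- y-slice
    have hlocy : IsLocalMin (fun s => v (xs, s)) ys := by
      have := hlocal.comp_continuous (g := fun s : ℝ => (xs, s))
        (continuous_const.prodMk continuous_id).continuousAt
      exact this
    have hψy : ∀ s : ℝ, HasDerivAt (fun u => ψ xs u)
        (A * cosv * (Real.exp (lam * (s - py + 1)) * lam)) s := by
      intro s
      have hliny : HasDerivAt (fun u : ℝ => lam * (u - py + 1)) lam s := by
        simpa using (((hasDerivAt_id s).sub_const py).add_const 1).const_mul lam
      exact (hliny.exp.sub_const 1).const_mul (A * cosv)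
    have hgy : ∀ s : ℝ, HasDerivAt (fun u => v (xs, u))
        (dY φ xs s - A * cosv * (Real.exp (lam * (s - py + 1)) * lam)) s :=
      fun s => (hDY xs s).sub (hψy s)
    have hψyy : HasDerivAt (fun s => dY φ xs s - A * cosv * (Real.exp (lam * (s - py + 1)) * lam))
        (dY (dY φ) xs ys - A * cosv * (Real.exp (lam * (ys - py + 1)) * lam * lam)) ys := by
      apply (hDYY xs ys).sub
      have hliny : HasDerivAt (fun u : ℝ => lam * (u - py + 1)) lam ys := by
        simpa using (((hasDerivAt_id ys).sub_const py).add_const 1).const_mul lam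
      exact (hliny.exp.mul_const lam).const_mul (A * cosv)
    have hyy : 0 ≤ dY (dY φ) xs ys - A * cosv * (Ee * lam * lam) :=
      second_nonneg_of_localmin hgy hψyy hlocy
    -- first order condition in y
    have hy0 : dY φ xs ys - A * cosv * (Ee * lam) = 0 := by
      have h1 : deriv (fun s => v (xs, s)) ys = 0 := hlocy.deriv_eq_zero
      have h2 := (hgy ys).deriv
      rw [h1] at h2
      exact h2.symm
    -- combine
    have hS := hsup xs ys
    have hbxs := hb xs
    have hbl : -M ≤ b xs := by cases' abs_le.mp hbxs with h _; linarith
    have hdy : dY φ xs ys = A * cosv * (Ee * lam) := by linarith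
    have ht : 0 ≤ A * cosv * (Ee * lam) := by positivity
    have hb1 : b xs * dY φ xs ys ≥ -M * (A * cosv * (Ee * lam)) := by
      rw [hdy]
      exact mul_le_mul_of_nonneg_right hbl ht
    -- 0 ≥ dXX + dYY + b*dY ≥ A*cosv*(M*ω*Ee + ω^2) > 0
    have hsum : dX (dX φ) xs ys + dY (dY φ) xs ys + b xs * dY φ xs ys ≥
        -(A * cosv * (ω * ω) * (Ee - 1)) + A * cosv * (Ee * lam * lam)
          + (-M * (A * cosv * (Ee * lam))) := by
      have e1 : A * (-(cosv * ω) * ω) * (Ee - 1) = -(A * cosv * (ω * ω) * (Ee - 1)) := by ring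
      rw [e1] at hxx
      linarith [hxx, hyy, hb1]
    have heq2 : -(A * cosv * (ω * ω) * (Ee - 1)) + A * cosv * (Ee * lam * lam)
          + (-M * (A * cosv * (Ee * lam))) = A * cosv * (Ee * ω * M + ω * ω) := by
      rw [hlamdef]; ring
    have hpos2 : 0 < A * cosv * (Ee * ω * M + ω * ω) := by
      apply mul_pos (mul_pos hApos hcosvpos)
      nlinarith [mul_nonneg (mul_nonneg (by linarith : (0:ℝ) ≤ Ee) hωpos.le) hM]
    rw [heq2] at hsum
    linarith [hS, hsum, hpos2]
  -- conclude
  have hfin : 0 ≤ v (px, py) := le_trans key (hmin hpQ)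
  have hval : ψ px py = m / k * (Real.exp lam - 1) := by
    rw [hψdef]; simp only
    have h1 : ω * (px - px) = 0 := by ring
    have h2 : lam * (py - py + 1) = lam := by ring
    rw [h1, h2, Real.cos_zero, mul_one]
  simp only [hvdef] at hfin
  rw [hval] at hfin
  have hgoal : m * ((Real.exp lam - 1) / k) ≤ φ px py := by
    have he : m * ((Real.exp lam - 1) / k) = m / k * (Real.exp lam - 1) := by ring
    rw [he]; linarith
  exact hgoal

set_option maxHeartbeats 800000 in
/-- For a conical front φ satisfying the conical conditions at infinity, the infimum of φ over
any upper cone C⁺_{α,β,l} is positive. -/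
theorem stmt13 (α β : ℝ) (hα : α ∈ Set.Ioo 0 Real.pi) (hβ : β ∈ Set.Ioo 0 Real.pi)
    (L c : ℝ) (hL : 0 < L) (q f : ℝ → ℝ) (hq : Continuous q) (hqper : Function.Periodic q L)
    (hf : ∃ K : NNReal, LipschitzWith K f) (hf0 : f 0 = 0)
    (hfnonneg : ∀ s ∈ Set.Icc (0:ℝ) 1, 0 ≤ f s)
    (φ : ℝ → ℝ → ℝ) (hreg : ContDiff ℝ 2 (fun p : ℝ × ℝ => φ p.1 p.2))
    (hrange : ∀ x y : ℝ, φ x y ∈ Set.Icc (0:ℝ) 1)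
    (heq : ∀ x y : ℝ, dX (dX φ) x y + dY (dY φ) x y + (q x - c) * dY φ x y + f (φ x y) = 0)
    (hcone0 : ∀ ε > (0:ℝ), ∃ l₀ : ℝ, ∀ l ≤ l₀, ∀ p ∈ Cminus α β l, φ p.1 p.2 ≤ ε)
    (hcone1 : ∀ ε > (0:ℝ), ∃ l₁ : ℝ, ∀ l ≥ l₁, ∀ p ∈ Cplus α β l, 1 - ε ≤ φ p.1 p.2) :
    ∀ l : ℝ, ∃ m > (0:ℝ), ∀ p ∈ Cplus α β l, m ≤ φ p.1 p.2 := by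
  intro l
  -- a uniform bound for |q x - c|
  obtain ⟨M0, hM0⟩ : ∃ C, ∀ x ∈ Icc (0:ℝ) L, ‖q x - c‖ ≤ C :=
    isCompact_Icc.exists_bound_of_continuousOn ((hq.sub continuous_const).continuousOn)
  set M : ℝ := max M0 0 with hMdef
  have hM : 0 ≤ M := le_max_right _ _
  have hb : ∀ x : ℝ, |q x - c| ≤ M := by
    intro x
    obtain ⟨y, hy, hxy⟩ := hqper.exists_mem_Ico₀ hL x
    have h1 := hM0 y (Ico_subset_Icc_self hy)
    rw [Real.norm_eq_abs] at h1
    rw [hxy]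
    exact le_trans h1 (le_max_left _ _)
  have hDX := hasDerivAt_dX hreg
  have hDXX := hasDerivAt_dXX hreg
  have hDY := hasDerivAt_dY hreg
  have hDYY := hasDerivAt_dYY hreg
  have hcont : Continuous (fun p : ℝ × ℝ => φ p.1 p.2) := hreg.continuous
  have hsup : ∀ x y : ℝ, dX (dX φ) x y + dY (dY φ) x y + (q x - c) * dY φ x y ≤ 0 := by
    intro x y
    have h1 := heq x y
    have h2 := hfnonneg _ (hrange x y)
    linarith
  have hpos : ∀ x y : ℝ, 0 ≤ φ x y := fun x y => (hrange x y).1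
  obtain ⟨l₁, hl₁⟩ := hcone1 (1/2) (by norm_num)
  have hhalf : ∀ p ∈ Cplus α β l₁, (1:ℝ)/2 ≤ φ p.1 p.2 := by
    intro p hp
    have := hl₁ l₁ le_rfl p hp
    linarith
  set CX : ℝ := max |Real.cos α / Real.sin α| |Real.cos β / Real.sin β| with hCXdef
  have hCX : 0 ≤ CX := le_trans (abs_nonneg _) (le_max_left _ _)
  set T : ℝ := 1 + CX with hTdef
  have hT : 1 ≤ T := by linarith
  set κ : ℝ := (Real.exp (M + π/2) - 1) / (Real.exp ((M + π/2) * (T + 1)) - 1) with hκdef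
  have hMπ : 0 < M + π / 2 := by nlinarith [Real.pi_pos]
  have hκpos : 0 < κ := by
    apply div_pos
    · exact sub_pos.mpr (Real.one_lt_exp_iff.mpr hMπ)
    · exact sub_pos.mpr (Real.one_lt_exp_iff.mpr (by nlinarith))
  have main : ∀ n : ℕ, ∀ p ∈ Cplus α β (l₁ - n), 1/2 * κ^n ≤ φ p.1 p.2 := by
    intro n
    induction n with
    | zero =>
      intro p hp
      simp only [Nat.cast_zero, sub_zero] at hp
      simpa using hhalf p hp
    | succ n ih =>
      intro p hp
      have htop : ∀ x' : ℝ, |x' - p.1| ≤ 1 → 1/2 * κ^n ≤ φ x' (p.2 + T) := by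
        intro x' hx'
        apply ih (x', p.2 + T)
        have habs : |x' - p.1| ≥ 0 := abs_nonneg _
        have hco := cone_fact α β (l₁ - (n+1 : ℕ)) 1 one_pos.le p (x', p.2 + T) hp
          (by simp only; rw [← hCXdef]; nlinarith)
        have hcast : l₁ - ((n+1 : ℕ) : ℝ) + 1 = l₁ - (n : ℝ) := by push_cast; ring
        rwa [hcast] at hco
      have hst := step_lemma φ (fun x => q x - c) M hM hb hDX hDXX hDY hDYY hcont hsup hpos
        T hT (1/2 * κ^n) (by positivity) p.1 p.2 htop
      calc 1/2 * κ^(n+1) = (1/2 * κ^n) * κ := by ring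
        _ ≤ φ p.1 p.2 := hst
  obtain ⟨n, hn⟩ := exists_nat_ge (l₁ - l)
  refine ⟨1/2 * κ^n, by positivity, ?_⟩
  intro p hp
  exact main n p (Cplus_mono α β (by linarith) hp)
end

section
/- Suppose φ : ℝ² → ℝ is a C² solution of Δφ + (q(x) − c) ∂_y φ + f(φ) = 0 on ℝ² with 0 < φ < 1, satisfying the conical conditions at infinity for angles α, β ∈ (0,π), where q is continuous L-periodic and f is Lipschitz. If φ(x, y + τ) ≥ φ(x, y) for all (x,y) ∈ ℝ² and all τ ≥ 0, then ∂_y φ(x,y) > 0 for all (x,y) ∈ ℝ². -/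
open Set Filter

/-- Second derivative test at a local maximum. -/
lemma secondDerivTest {g g' : ℝ → ℝ} {x a : ℝ}
    (hd : ∀ t, HasDerivAt g (g' t) t) (hd2 : HasDerivAt g' a x)
    (hmax : IsLocalMax g x) : a ≤ 0 := by
  by_contra hpos
  push_neg at hpos
  have hg'x : g' x = 0 := by
    have := hmax.deriv_eq_zero
    rwa [(hd x).deriv] at this
  have hslope := hasDerivAt_iff_tendsto_slope.1 hd2
  have hev : ∀ᶠ t in nhdsWithin x (Ioi x), 0 < slope g' x t :=
    (hslope.mono_left (nhdsWithin_mono x (fun t ht => ne_of_gt ht))).eventually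
      (eventually_gt_nhds hpos)
  have hev2 : ∀ᶠ t in nhdsWithin x (Ioi x), 0 < g' t := by
    filter_upwards [hev, self_mem_nhdsWithin] with t ht ht2
    have hxt : x < t := ht2
    rw [slope_def_field, div_eq_mul_inv, hg'x, sub_zero] at ht
    have h3 : (0:ℝ) < (t - x)⁻¹ := inv_pos.2 (sub_pos.2 hxt)
    nlinarith
  rcases (mem_nhdsGT_iff_exists_Ioo_subset).1 hev2 with ⟨u, hu, hsub⟩
  have hu' : x < u := hu
  have hmono : StrictMonoOn g (Icc x u) := by
    apply strictMonoOn_of_deriv_pos (convex_Icc x u)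
      (fun t _ => (hd t).continuousAt.continuousWithinAt)
    intro t ht
    rw [interior_Icc] at ht
    rw [(hd t).deriv]
    exact hsub ht
  have hmem : Ioo x u ∈ nhdsWithin x (Ioi x) := Ioo_mem_nhdsGT_of_mem ⟨le_refl x, hu'⟩
  have hev3 : ∀ᶠ t in nhdsWithin x (Ioi x), g t ≤ g x :=
    (hmax.filter_mono nhdsWithin_le_nhds)
  rcases (hev3.and (eventually_mem_set.2 hmem)).exists with ⟨t, ht1, ht2⟩
  have : g x < g t := hmono ⟨le_refl x, le_of_lt hu'⟩ ⟨le_of_lt ht2.1, le_of_lt ht2.2⟩ ht2.1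
  linarith


open Set Filter

section Slice
variable {φ : ℝ → ℝ → ℝ} (hreg : ContDiff ℝ 2 (fun p : ℝ × ℝ => φ p.1 p.2))
include hreg

/-- partial derivatives via fderiv -/
noncomputable def PX (φ : ℝ → ℝ → ℝ) : ℝ × ℝ → ℝ :=
  fun p => fderiv ℝ (fun p : ℝ × ℝ => φ p.1 p.2) p (1, 0)

noncomputable def PY (φ : ℝ → ℝ → ℝ) : ℝ × ℝ → ℝ :=
  fun p => fderiv ℝ (fun p : ℝ × ℝ => φ p.1 p.2) p (0, 1)

lemma hasX (x y : ℝ) : HasDerivAt (fun s => φ s y) (PX φ (x, y)) x := by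
  have hΦ : HasFDerivAt (fun p : ℝ × ℝ => φ p.1 p.2)
      (fderiv ℝ (fun p : ℝ × ℝ => φ p.1 p.2) (x, y)) (x, y) :=
    (hreg.differentiable (by norm_num)).differentiableAt.hasFDerivAt
  have hj : HasDerivAt (fun s : ℝ => (s, y)) ((1:ℝ), (0:ℝ)) x :=
    (hasDerivAt_id x).prodMk (hasDerivAt_const x y)
  exact hΦ.comp_hasDerivAt x hj

lemma hasY (x y : ℝ) : HasDerivAt (fun t => φ x t) (PY φ (x, y)) y := by
  have hΦ : HasFDerivAt (fun p : ℝ × ℝ => φ p.1 p.2)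
      (fderiv ℝ (fun p : ℝ × ℝ => φ p.1 p.2) (x, y)) (x, y) :=
    (hreg.differentiable (by norm_num)).differentiableAt.hasFDerivAt
  have hj : HasDerivAt (fun t : ℝ => (x, t)) ((0:ℝ), (1:ℝ)) y :=
    (hasDerivAt_const y x).prodMk (hasDerivAt_id y)
  exact hΦ.comp_hasDerivAt y hj

lemma PXc1 : ContDiff ℝ 1 (PX φ) := by
  have h1 : ContDiff ℝ 1 (fderiv ℝ (fun p : ℝ × ℝ => φ p.1 p.2)) :=
    hreg.fderiv_right (by norm_num)
  exact (ContinuousLinearMap.apply ℝ ℝ ((1:ℝ), (0:ℝ))).contDiff.comp h1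

lemma PYc1 : ContDiff ℝ 1 (PY φ) := by
  have h1 : ContDiff ℝ 1 (fderiv ℝ (fun p : ℝ × ℝ => φ p.1 p.2)) :=
    hreg.fderiv_right (by norm_num)
  exact (ContinuousLinearMap.apply ℝ ℝ ((0:ℝ), (1:ℝ))).contDiff.comp h1

lemma dX_eq (x y : ℝ) : dX φ x y = PX φ (x, y) := (hasX hreg x y).deriv

lemma dY_eq (x y : ℝ) : dY φ x y = PY φ (x, y) := (hasY hreg x y).deriv

lemma PX_sliceX_diff (y : ℝ) : Differentiable ℝ (fun s => PX φ (s, y)) :=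
  ((PXc1 hreg).comp (contDiff_id.prodMk contDiff_const)).differentiable (by norm_num)

lemma PY_sliceX_diff (y : ℝ) : Differentiable ℝ (fun s => PY φ (s, y)) :=
  ((PYc1 hreg).comp (contDiff_id.prodMk contDiff_const)).differentiable (by norm_num)

lemma PY_sliceY_diff (x : ℝ) : Differentiable ℝ (fun t => PY φ (x, t)) :=
  ((PYc1 hreg).comp (contDiff_const.prodMk contDiff_id)).differentiable (by norm_num)

lemma dXX_eq (x y : ℝ) : dX (dX φ) x y = deriv (fun s => PX φ (s, y)) x := by
  have : (fun s => dX φ s y) = fun s => PX φ (s, y) := funext fun s => dX_eq hreg s y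
  unfold dX
  rw [show (fun s => deriv (fun s' => φ s' y) s) = fun s => PX φ (s, y) from this]

lemma dYY_eq (x y : ℝ) : dY (dY φ) x y = deriv (fun t => PY φ (x, t)) y := by
  have : (fun t => dY φ x t) = fun t => PY φ (x, t) := funext fun t => dY_eq hreg x t
  unfold dY
  rw [show (fun t => deriv (fun t' => φ x t') t) = fun t => PY φ (x, t) from this]

end Slice

open Real

noncomputable def gauss (lam t0 t : ℝ) : ℝ := Real.exp (-lam * (t - t0)^2)

lemma gauss_pos (lam t0 t : ℝ) : 0 < gauss lam t0 t := Real.exp_pos _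

lemma hasDeriv_gauss (lam t0 t : ℝ) :
    HasDerivAt (gauss lam t0) (-2 * lam * (t - t0) * gauss lam t0 t) t := by
  have h1 : HasDerivAt (fun s : ℝ => -lam * (s - t0)^2) (-lam * (2 * (t - t0))) t := by
    have h2 : HasDerivAt (fun s : ℝ => (s - t0)^2) (2 * (t - t0)) t := by
      have := ((hasDerivAt_id t).sub_const t0).fun_pow 2
      simpa using this
    simpa using h2.const_mul (-lam)
  have := (Real.hasDerivAt_exp (-lam * (t - t0)^2)).comp t h1
  refine this.congr_deriv ?_
  unfold gauss; ring

lemma hasDeriv_gauss' (lam t0 t : ℝ) :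
    HasDerivAt (fun s => -2 * lam * (s - t0) * gauss lam t0 s)
      ((4 * lam^2 * (t - t0)^2 - 2 * lam) * gauss lam t0 t) t := by
  have h1 : HasDerivAt (fun s : ℝ => -2 * lam * (s - t0)) (-2 * lam) t := by
    simpa using ((hasDerivAt_id t).sub_const t0).const_mul (-2 * lam)
  have := h1.mul (hasDeriv_gauss lam t0 t)
  refine this.congr_deriv ?_
  ring

open Set Filter Real
set_option maxHeartbeats 8000000 in

lemma key_step
    (φ : ℝ → ℝ → ℝ) (hreg : ContDiff ℝ 2 (fun p : ℝ × ℝ => φ p.1 p.2))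
    (q : ℝ → ℝ) (c : ℝ) (f : ℝ → ℝ)
    (hpde : ∀ x y : ℝ, deriv (fun s => PX φ (s, y)) x + deriv (fun t => PY φ (x, t)) y
      + (q x - c) * PY φ (x, y) + f (φ x y) = 0)
    (hz : ∀ x y h' : ℝ, 0 ≤ h' → φ x y ≤ φ x (y + h'))
    (K' : ℝ) (hK1 : 1 ≤ K') (hlip : ∀ a b : ℝ, |f a - f b| ≤ K' * |a - b|)
    (x0 ystar m rbar : ℝ) (hm : 0 < m) (hrbar : 0 < rbar)
    (hball : ∀ a b : ℝ, |a - x0| ≤ rbar → |b - ystar| ≤ rbar → m ≤ PY φ (a, b))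
    (R B lam : ℝ) (hR : 0 < R)
    (hB : ∀ x ∈ Set.Icc (x0 - R) (x0 + R), |q x - c| ≤ B) (hB0 : 0 ≤ B)
    (hlam : 0 < lam)
    (hkey : 4*lam + 2*lam*R*B + K' + 1 ≤ 4*lam^2*(rbar/2)^2)
    (h : ℝ) (hh0 : 0 < h) (hhr : h ≤ rbar/2)
    (p : ℝ × ℝ) (hp1 : (rbar/2)^2 ≤ (p.1 - x0)^2 + (p.2 - ystar)^2)
    (hp2 : (p.1 - x0)^2 + (p.2 - ystar)^2 ≤ R^2) :
    m * h * (gauss lam x0 p.1 * gauss lam ystar p.2 - Real.exp (-lam * R^2))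
      ≤ φ p.1 (p.2 + h) - φ p.1 p.2 := by
  set ρ : ℝ := rbar/2 with hρdef
  have hρ : 0 < ρ := by positivity
  set E : ℝ := Real.exp (-lam * R^2) with hEdef
  have hE : 0 < E := Real.exp_pos _
  set u : ℝ × ℝ → ℝ := fun p' =>
    m * h * (gauss lam x0 p'.1 * gauss lam ystar p'.2 - E) - (φ p'.1 (p'.2 + h) - φ p'.1 p'.2)
    with hudef
  set A : Set (ℝ × ℝ) := {p' : ℝ × ℝ | (p'.1 - x0)^2 + (p'.2 - ystar)^2 ∈ Set.Icc (ρ^2) (R^2)}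
    with hAdef
  suffices hall : ∀ p' ∈ A, u p' ≤ 0 by
    have := hall p ⟨hp1, hp2⟩
    simp only [hudef] at this
    linarith
  by_contra hcon
  push_neg at hcon
  obtain ⟨p₁, hp₁A, hp₁pos⟩ := hcon
  -- compactness of A
  have hfc : Continuous (fun p' : ℝ × ℝ => (p'.1 - x0)^2 + (p'.2 - ystar)^2) := by fun_prop
  have hclosed : IsClosed A := IsClosed.preimage hfc isClosed_Icc
  have hsub : A ⊆ Set.Icc ((x0 - R, ystar - R) : ℝ × ℝ) (x0 + R, ystar + R) := by
    rintro ⟨a, b⟩ ⟨-, h2⟩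
    simp only at h2
    have ha2 : (a - x0)^2 ≤ R^2 := by nlinarith [sq_nonneg (b - ystar)]
    have hb2 : (b - ystar)^2 ≤ R^2 := by nlinarith [sq_nonneg (a - x0)]
    constructor
    · constructor
      · simp only; nlinarith [sq_nonneg (a - x0 + R)]
      · simp only; nlinarith [sq_nonneg (b - ystar + R)]
    · constructor
      · simp only; nlinarith [sq_nonneg (a - x0 - R)]
      · simp only; nlinarith [sq_nonneg (b - ystar - R)]
  have hAcomp : IsCompact A := IsCompact.of_isClosed_subset isCompact_Icc hclosed hsub
  -- continuity of u
  have hgc : ∀ t0 : ℝ, Continuous (gauss lam t0) := by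
    intro t0; unfold gauss; fun_prop
  have hΦc : Continuous (fun p' : ℝ × ℝ => φ p'.1 p'.2) := hreg.continuous
  have hφ2 : Continuous (fun p' : ℝ × ℝ => φ p'.1 (p'.2 + h)) :=
    hΦc.comp (continuous_fst.prodMk (continuous_snd.add continuous_const))
  have hucont : Continuous u := by
    apply Continuous.sub
    · exact continuous_const.mul
        ((((hgc x0).comp continuous_fst).mul ((hgc ystar).comp continuous_snd)).sub
          continuous_const)
    · exact hφ2.sub hΦc
  obtain ⟨pb, hpbA, hpbmax⟩ := hAcomp.exists_isMaxOn ⟨p₁, hp₁A⟩ hucont.continuousOn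
  obtain ⟨xb, yb⟩ := pb
  have hub : 0 < u (xb, yb) := lt_of_lt_of_le hp₁pos (hpbmax hp₁A)
  have hmemb : (xb - x0)^2 + (yb - ystar)^2 ∈ Set.Icc (ρ^2) (R^2) := hpbA
  have hZ0 : 0 ≤ φ xb (yb + h) - φ xb yb := by
    have := hz xb yb h hh0.le; linarith
  -- case: inner boundary
  rcases eq_or_lt_of_le hmemb.1 with hinner | hgt
  · -- (xb-x0)^2+(yb-ystar)^2 = ρ^2
    have hx2 : (xb - x0)^2 ≤ ρ^2 := by nlinarith [sq_nonneg (yb - ystar)]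
    have hy2 : (yb - ystar)^2 ≤ ρ^2 := by nlinarith [sq_nonneg (xb - x0)]
    have hxabs : |xb - x0| ≤ ρ := by
      rw [abs_le]; constructor <;> nlinarith [sq_nonneg (xb - x0 + ρ), sq_nonneg (xb - x0 - ρ)]
    have hyabs : |yb - ystar| ≤ ρ := by
      rw [abs_le]; constructor <;>
        nlinarith [sq_nonneg (yb - ystar + ρ), sq_nonneg (yb - ystar - ρ)]
    obtain ⟨ξ, hξmem, hξeq⟩ := exists_hasDerivAt_eq_slope (fun t => φ xb t)
      (fun t => PY φ (xb, t)) (by linarith : yb < yb + h)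
      (fun t _ => (hasY hreg xb t).continuousAt.continuousWithinAt)
      (fun t _ => hasY hreg xb t)
    have hξball : m ≤ PY φ (xb, ξ) := by
      apply hball
      · calc |xb - x0| ≤ ρ := hxabs
          _ ≤ rbar := by rw [hρdef]; linarith
      · rw [abs_le]
        obtain ⟨h1, h2⟩ := abs_le.1 hyabs
        obtain ⟨h3, h4⟩ := hξmem
        constructor <;> [linarith; linarith]
    have hZval : m * h ≤ φ xb (yb + h) - φ xb yb := by
      have : PY φ (xb, ξ) = (φ xb (yb + h) - φ xb yb) / h := by
        rw [hξeq]; ring_nf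
      rw [this] at hξball
      calc m * h ≤ ((φ xb (yb + h) - φ xb yb) / h) * h := by
            apply mul_le_mul_of_nonneg_right hξball hh0.le
        _ = φ xb (yb + h) - φ xb yb := by field_simp
    have hw1 : gauss lam x0 xb * gauss lam ystar yb - E ≤ 1 := by
      have g1 : gauss lam x0 xb ≤ 1 := by
        unfold gauss; rw [Real.exp_le_one_iff]; nlinarith [sq_nonneg (xb - x0)]
      have g2 : gauss lam ystar yb ≤ 1 := by
        unfold gauss; rw [Real.exp_le_one_iff]; nlinarith [sq_nonneg (yb - ystar)]
      nlinarith [gauss_pos lam x0 xb, gauss_pos lam ystar yb]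
    have : u (xb, yb) ≤ 0 := by
      have hmh : 0 < m * h := mul_pos hm hh0
      show m * h * (gauss lam x0 xb * gauss lam ystar yb - E) - (φ xb (yb + h) - φ xb yb) ≤ 0
      nlinarith
    linarith
  rcases eq_or_lt_of_le hmemb.2 with houter | hlt
  · -- outer boundary
    have hG : gauss lam x0 xb * gauss lam ystar yb = E := by
      unfold gauss
      rw [← Real.exp_add, hEdef]
      congr 1
      rw [← houter]; ring
    have : u (xb, yb) ≤ 0 := by
      show m * h * (gauss lam x0 xb * gauss lam ystar yb - E) - (φ xb (yb + h) - φ xb yb) ≤ 0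
      rw [hG]; simp; linarith
    linarith
  -- interior case
  have hUopen : IsOpen {p' : ℝ × ℝ | (p'.1 - x0)^2 + (p'.2 - ystar)^2 ∈ Set.Ioo (ρ^2) (R^2)} :=
    IsOpen.preimage hfc isOpen_Ioo
  have hUmem : {p' : ℝ × ℝ | (p'.1 - x0)^2 + (p'.2 - ystar)^2 ∈ Set.Ioo (ρ^2) (R^2)}
      ∈ nhds ((xb, yb) : ℝ × ℝ) := hUopen.mem_nhds ⟨hgt, hlt⟩
  have hloc : IsLocalMax u (xb, yb) := by
    filter_upwards [hUmem] with p' hp'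
    exact hpbmax ⟨hp'.1.le, hp'.2.le⟩
  -- slice local maxima
  have hlocx : IsLocalMax (fun s => u (s, yb)) xb := by
    have ht : Filter.Tendsto (fun s : ℝ => ((s, yb) : ℝ × ℝ)) (nhds xb) (nhds ((xb, yb) : ℝ × ℝ)) :=
      (Continuous.prodMk continuous_id continuous_const).tendsto xb
    exact ht.eventually hloc
  have hlocy : IsLocalMax (fun t => u (xb, t)) yb := by
    have ht : Filter.Tendsto (fun t : ℝ => ((xb, t) : ℝ × ℝ)) (nhds yb) (nhds ((xb, yb) : ℝ × ℝ)) :=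
      (Continuous.prodMk continuous_const continuous_id).tendsto yb
    exact ht.eventually hloc
  -- x-direction second derivative test
  have hdx : ∀ s, HasDerivAt (fun s' => u (s', yb))
      (m * h * ((-2 * lam * (s - x0) * gauss lam x0 s) * gauss lam ystar yb)
        - (PX φ (s, yb + h) - PX φ (s, yb))) s := by
    intro s
    exact ((((hasDeriv_gauss lam x0 s).mul_const (gauss lam ystar yb)).sub_const E).const_mul
      (m * h)).sub ((hasX hreg s (yb + h)).sub (hasX hreg s yb))
  have hdx2 : HasDerivAt (fun s => m * h * ((-2 * lam * (s - x0) * gauss lam x0 s)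
        * gauss lam ystar yb) - (PX φ (s, yb + h) - PX φ (s, yb)))
      (m * h * (((4 * lam^2 * (xb - x0)^2 - 2 * lam) * gauss lam x0 xb) * gauss lam ystar yb)
        - (deriv (fun s => PX φ (s, yb + h)) xb - deriv (fun s => PX φ (s, yb)) xb)) xb :=
    (((hasDeriv_gauss' lam x0 xb).mul_const (gauss lam ystar yb)).const_mul (m * h)).sub
      (((PX_sliceX_diff hreg (yb + h)) xb).hasDerivAt.sub
        (((PX_sliceX_diff hreg yb) xb).hasDerivAt))
  have hax : m * h * (((4 * lam^2 * (xb - x0)^2 - 2 * lam) * gauss lam x0 xb)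
      * gauss lam ystar yb)
      - (deriv (fun s => PX φ (s, yb + h)) xb - deriv (fun s => PX φ (s, yb)) xb) ≤ 0 :=
    secondDerivTest hdx hdx2 hlocx
  -- y-direction
  have hshift : ∀ t : ℝ, HasDerivAt (fun t' => φ xb (t' + h)) (PY φ (xb, t + h)) t := by
    intro t
    have h1 := (hasY hreg xb (t + h)).comp t ((hasDerivAt_id t).add_const h)
    exact h1.congr_deriv (mul_one _)
  have hdy : ∀ t, HasDerivAt (fun t' => u (xb, t'))
      (m * h * (gauss lam x0 xb * (-2 * lam * (t - ystar) * gauss lam ystar t))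
        - (PY φ (xb, t + h) - PY φ (xb, t))) t := by
    intro t
    exact ((((hasDeriv_gauss lam ystar t).const_mul (gauss lam x0 xb)).sub_const E).const_mul
      (m * h)).sub ((hshift t).sub (hasY hreg xb t))
  have hshift2 : HasDerivAt (fun t => PY φ (xb, t + h))
      (deriv (fun t => PY φ (xb, t)) (yb + h)) yb := by
    have h1 := (((PY_sliceY_diff hreg xb) (yb + h)).hasDerivAt).comp yb
      ((hasDerivAt_id yb).add_const h)
    exact h1.congr_deriv (mul_one _)
  have hdy2 : HasDerivAt (fun t => m * h * (gauss lam x0 xb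
        * (-2 * lam * (t - ystar) * gauss lam ystar t)) - (PY φ (xb, t + h) - PY φ (xb, t)))
      (m * h * (gauss lam x0 xb * ((4 * lam^2 * (yb - ystar)^2 - 2 * lam) * gauss lam ystar yb))
        - (deriv (fun t => PY φ (xb, t)) (yb + h) - deriv (fun t => PY φ (xb, t)) yb)) yb :=
    (((hasDeriv_gauss' lam ystar yb).const_mul (gauss lam x0 xb)).const_mul (m * h)).sub
      (hshift2.sub (((PY_sliceY_diff hreg xb) yb).hasDerivAt))
  have hay : m * h * (gauss lam x0 xb * ((4 * lam^2 * (yb - ystar)^2 - 2 * lam)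
      * gauss lam ystar yb))
      - (deriv (fun t => PY φ (xb, t)) (yb + h) - deriv (fun t => PY φ (xb, t)) yb) ≤ 0 :=
    secondDerivTest hdy hdy2 hlocy
  -- first derivative vanishes in y
  have hy1 : m * h * (gauss lam x0 xb * (-2 * lam * (yb - ystar) * gauss lam ystar yb))
      - (PY φ (xb, yb + h) - PY φ (xb, yb)) = 0 := by
    have := hlocy.deriv_eq_zero
    rwa [(hdy yb).deriv] at this
  -- PDE instances
  have e1 := hpde xb (yb + h)
  have e2 := hpde xb yb
  -- bounds
  have hx2 : (xb - x0)^2 ≤ R^2 := by nlinarith [sq_nonneg (yb - ystar), hmemb.2]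
  have hqb : |q xb - c| ≤ B :=
    hB xb (Set.mem_Icc.mpr ⟨by nlinarith [sq_nonneg (xb - x0 + R)],
      by nlinarith [sq_nonneg (xb - x0 - R)]⟩)
  have hyR : |yb - ystar| ≤ R := by
    have hy2 : (yb - ystar)^2 ≤ R^2 := by nlinarith [sq_nonneg (xb - x0), hmemb.2]
    rw [abs_le]
    constructor
    · nlinarith [sq_nonneg (yb - ystar + R)]
    · nlinarith [sq_nonneg (yb - ystar - R)]
  have hflip : -(K' * (φ xb (yb + h) - φ xb yb)) ≤ f (φ xb (yb + h)) - f (φ xb yb) := by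
    have h1 := hlip (φ xb (yb + h)) (φ xb yb)
    have h2 : |φ xb (yb + h) - φ xb yb| = φ xb (yb + h) - φ xb yb := abs_of_nonneg hZ0
    rw [h2] at h1
    have := abs_le.1 h1
    linarith [this.1]
  set G : ℝ := gauss lam x0 xb * gauss lam ystar yb with hGdef
  have hGpos : 0 < G := mul_pos (gauss_pos _ _ _) (gauss_pos _ _ _)
  set Z : ℝ := φ xb (yb + h) - φ xb yb with hZdef
  have hZu : Z = m * h * (G - E) - u (xb, yb) := by
    have : u (xb, yb)
        = m * h * (gauss lam x0 xb * gauss lam ystar yb - E) - (φ xb (yb + h) - φ xb yb) := rfl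
    rw [this, ← hGdef, ← hZdef]; ring
  -- combine: sum of second-order tests plus PDE difference
  have hsum : m * h * G * (4 * lam^2 * ((xb - x0)^2 + (yb - ystar)^2) - 4 * lam)
      + (q xb - c) * (m * h * (G * (-2 * lam * (yb - ystar))))
      + (f (φ xb (yb + h)) - f (φ xb yb)) ≤ 0 := by
    have hPYdiff : PY φ (xb, yb + h) - PY φ (xb, yb)
        = m * h * (gauss lam x0 xb * (-2 * lam * (yb - ystar) * gauss lam ystar yb)) := by
      linarith
    have hSd : deriv (fun s => PX φ (s, yb + h)) xb - deriv (fun s => PX φ (s, yb)) xb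
        + (deriv (fun t => PY φ (xb, t)) (yb + h) - deriv (fun t => PY φ (xb, t)) yb)
        = -((q xb - c) * (PY φ (xb, yb + h) - PY φ (xb, yb)))
          - (f (φ xb (yb + h)) - f (φ xb yb)) := by
      linarith
    rw [hPYdiff] at hSd
    have hcomb := add_le_add hax hay
    rw [hGdef]
    linarith [hcomb, hSd]
  -- final contradiction
  have hmh : 0 < m * h := mul_pos hm hh0
  have hr2 : ρ^2 ≤ (xb - x0)^2 + (yb - ystar)^2 := hmemb.1
  have hbound1 : (q xb - c) * (-2 * lam * (yb - ystar)) ≥ -(2 * lam * R * B) := by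
    have habs : |(q xb - c) * (-2 * lam * (yb - ystar))| ≤ 2 * lam * R * B := by
      rw [abs_mul]
      have h1 : |(-2 : ℝ) * lam * (yb - ystar)| = 2 * lam * |yb - ystar| := by
        rw [abs_mul, abs_mul]
        simp [abs_of_pos hlam]
      rw [h1]
      calc |q xb - c| * (2 * lam * |yb - ystar|) ≤ B * (2 * lam * R) := by
            apply mul_le_mul hqb _ (by positivity) hB0
            have : 0 ≤ 2 * lam := by linarith
            nlinarith
        _ = 2 * lam * R * B := by ring
    linarith [neg_abs_le ((q xb - c) * (-2 * lam * (yb - ystar))), habs]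
  have hlamterm : 4 * lam^2 * ((xb - x0)^2 + (yb - ystar)^2) - 4 * lam - 2 * lam * R * B
      ≥ K' + 1 := by
    have : 4 * lam^2 * ρ^2 ≤ 4 * lam^2 * ((xb - x0)^2 + (yb - ystar)^2) := by nlinarith
    nlinarith
  -- from hsum : m h G (...) - 2 lam stuff + f diff ≤ 0
  have hstep : m * h * G * (K' + 1) ≤ K' * Z := by
    have h1 : m * h * G * (4 * lam^2 * ((xb - x0)^2 + (yb - ystar)^2) - 4 * lam
        - 2 * lam * R * B) ≤ K' * Z := by
      have hq1 : (q xb - c) * (m * h * (G * (-2 * lam * (yb - ystar))))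
          ≥ m * h * G * (-(2 * lam * R * B)) := by
        have := mul_le_mul_of_nonneg_left hbound1 (le_of_lt (mul_pos hmh hGpos))
        calc (q xb - c) * (m * h * (G * (-2 * lam * (yb - ystar))))
            = (m * h * G) * ((q xb - c) * (-2 * lam * (yb - ystar))) := by ring
          _ ≥ (m * h * G) * (-(2 * lam * R * B)) := this
          _ = m * h * G * (-(2 * lam * R * B)) := rfl
      linarith [hsum, hflip, hq1]
    nlinarith [mul_le_mul_of_nonneg_left hlamterm (le_of_lt (mul_pos hmh hGpos))]
  rw [hZu] at hstep
  have hpos1 : 0 < m * h * G := mul_pos hmh hGpos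
  have hpos2 : 0 < K' * (m * h * E) :=
    mul_pos (by linarith : (0:ℝ) < K') (mul_pos hmh hE)
  have hpos3 : 0 < K' * u (xb, yb) := mul_pos (by linarith : (0:ℝ) < K') hub
  nlinarith [hstep, hpos1, hpos2, hpos3]

set_option maxHeartbeats 1000000 in
/-- If a conical front φ (0 < φ < 1, conical conditions at infinity) is nondecreasing in y
(φ(x, y+τ) ≥ φ(x,y) for all τ ≥ 0), then ∂_yφ > 0 everywhere. -/
theorem stmt15 (α β : ℝ) (hα : α ∈ Set.Ioo 0 Real.pi) (hβ : β ∈ Set.Ioo 0 Real.pi)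
    (L c : ℝ) (hL : 0 < L) (q f : ℝ → ℝ) (hq : Continuous q) (hqper : Function.Periodic q L)
    (hf : ∃ K : NNReal, LipschitzWith K f)
    (φ : ℝ → ℝ → ℝ) (hreg : ContDiff ℝ 2 (fun p : ℝ × ℝ => φ p.1 p.2))
    (hrange : ∀ x y : ℝ, φ x y ∈ Set.Ioo (0:ℝ) 1)
    (heq : ∀ x y : ℝ, dX (dX φ) x y + dY (dY φ) x y + (q x - c) * dY φ x y + f (φ x y) = 0)
    (hcone0 : ∀ ε > (0:ℝ), ∃ l₀ : ℝ, ∀ l ≤ l₀, ∀ p ∈ Cminus α β l, φ p.1 p.2 ≤ ε)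
    (hcone1 : ∀ ε > (0:ℝ), ∃ l₁ : ℝ, ∀ l ≥ l₁, ∀ p ∈ Cplus α β l, 1 - ε ≤ φ p.1 p.2)
    (hmono : ∀ τ ≥ (0:ℝ), ∀ x y : ℝ, φ x y ≤ φ x (y + τ)) :
    ∀ x y : ℝ, 0 < dY φ x y := by
  intro x0 y0
  obtain ⟨K0, hK0⟩ := hf
  set K' : ℝ := (K0 : ℝ) + 1 with hK'def
  have hK1 : 1 ≤ K' := by
    have h0 : (0:ℝ) ≤ (K0 : ℝ) := K0.coe_nonneg
    rw [hK'def]; linarith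
  have hlip : ∀ a b : ℝ, |f a - f b| ≤ K' * |a - b| := by
    intro a b
    have h1 := hK0.dist_le_mul a b
    rw [Real.dist_eq, Real.dist_eq] at h1
    have h2 : (K0 : ℝ) * |a - b| ≤ K' * |a - b| := by
      apply mul_le_mul_of_nonneg_right _ (abs_nonneg _)
      rw [hK'def]; linarith
    linarith
  -- PDE in PX/PY form
  have hpde : ∀ x y : ℝ, deriv (fun s => PX φ (s, y)) x + deriv (fun t => PY φ (x, t)) y
      + (q x - c) * PY φ (x, y) + f (φ x y) = 0 := by
    intro x y
    have := heq x y
    rwa [dXX_eq hreg, dYY_eq hreg, dY_eq hreg] at this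
  have hz : ∀ x y h' : ℝ, 0 ≤ h' → φ x y ≤ φ x (y + h') := fun x y h' hh' => hmono h' hh' x y
  -- Step 1: points with small and large values on the vertical line through x0
  obtain ⟨l₀, hl₀⟩ := hcone0 (1/3) (by norm_num)
  obtain ⟨l₁, hl₁⟩ := hcone1 (1/3) (by norm_num)
  set t1 : ℝ := |Real.cos α / Real.sin α| with ht1def
  set t2 : ℝ := |Real.cos β / Real.sin β| with ht2def
  set M : ℝ := |x0| * (t1 + t2) with hMdef
  have hM0 : 0 ≤ M := by positivity
  set y1 : ℝ := -M + min l₀ l₁ - 1 with hy1def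
  set y2 : ℝ := M + l₁ + 1 with hy2def
  have hy12 : y1 < y2 := by
    have := min_le_right l₀ l₁
    rw [hy1def, hy2def]; linarith
  have hφy1 : φ x0 y1 ≤ 1/3 := by
    refine hl₀ (min l₀ l₁) (min_le_left _ _) (x0, y1) ⟨?_, ?_⟩
    · intro hx0
      have h1 : -(|x0| * t1) ≤ x0 * (Real.cos α / Real.sin α) := by
        rw [ht1def, ← abs_mul]
        exact neg_abs_le _
      have h2 : |x0| * t1 ≤ M := by
        rw [hMdef]
        nlinarith [abs_nonneg x0, abs_nonneg (Real.cos β / Real.sin β)]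
      show y1 ≤ x0 * (Real.cos α / Real.sin α) + min l₀ l₁
      rw [hy1def]; linarith
    · intro hx0
      have h1 : -(|x0| * t2) ≤ -x0 * (Real.cos β / Real.sin β) := by
        rw [ht2def, ← abs_mul, ← abs_neg (x0 * (Real.cos β / Real.sin β))]
        have : -x0 * (Real.cos β / Real.sin β) = -(x0 * (Real.cos β / Real.sin β)) := by ring
        rw [this]
        exact neg_abs_le _
      have h2 : |x0| * t2 ≤ M := by
        rw [hMdef]
        nlinarith [abs_nonneg x0, abs_nonneg (Real.cos α / Real.sin α)]
      show y1 ≤ -x0 * (Real.cos β / Real.sin β) + min l₀ l₁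
      rw [hy1def]; linarith
  have hφy2 : (2:ℝ)/3 ≤ φ x0 y2 := by
    have hmem : ((x0, y2) : ℝ × ℝ) ∈ Cplus α β l₁ := by
      apply subset_closure
      intro hmem2
      obtain ⟨hA, hB⟩ := hmem2
      rcases le_or_gt x0 0 with hx0 | hx0
      · have h1 := hA hx0
        have h2 : x0 * (Real.cos α / Real.sin α) ≤ |x0| * t1 := by
          rw [ht1def, ← abs_mul]; exact le_abs_self _
        have h3 : |x0| * t1 ≤ M := by
          rw [hMdef]; nlinarith [abs_nonneg x0, abs_nonneg (Real.cos β / Real.sin β)]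
        rw [hy2def] at h1
        simp only at h1
        linarith
      · have h1 := hB hx0.le
        have h2 : -x0 * (Real.cos β / Real.sin β) ≤ |x0| * t2 := by
          rw [ht2def, ← abs_mul]
          calc -x0 * (Real.cos β / Real.sin β) ≤ |(-x0) * (Real.cos β / Real.sin β)| :=
                le_abs_self _
            _ = |x0 * (Real.cos β / Real.sin β)| := by rw [← abs_neg]; ring_nf
        have h3 : |x0| * t2 ≤ M := by
          rw [hMdef]; nlinarith [abs_nonneg x0, abs_nonneg (Real.cos α / Real.sin α)]
        rw [hy2def] at h1
        simp only at h1
        linarith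
    have := hl₁ l₁ le_rfl (x0, y2) hmem
    norm_num at this
    exact this
  -- Step 2: a point where PY φ is positive
  obtain ⟨ystar, hystar_mem, hystar_eq⟩ := exists_hasDerivAt_eq_slope (fun t => φ x0 t)
    (fun t => PY φ (x0, t)) hy12
    (fun t _ => (hasY hreg x0 t).continuousAt.continuousWithinAt)
    (fun t _ => hasY hreg x0 t)
  have hm0pos : 0 < PY φ (x0, ystar) := by
    rw [hystar_eq]
    apply div_pos _ (by linarith)
    linarith
  set m : ℝ := PY φ (x0, ystar) / 2 with hmdef
  have hm : 0 < m := by positivity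
  -- continuity ball
  have hPYcont : Continuous (PY φ) := (PYc1 hreg).continuous
  obtain ⟨δ, hδpos, hδ⟩ := Metric.continuousAt_iff.1 (hPYcont.continuousAt
    (x := ((x0, ystar) : ℝ × ℝ))) m hm
  set rbar : ℝ := δ / 2 with hrbardef
  have hrbar : 0 < rbar := by positivity
  have hball : ∀ a b : ℝ, |a - x0| ≤ rbar → |b - ystar| ≤ rbar → m ≤ PY φ (a, b) := by
    intro a b ha hb
    have hdist : dist ((a, b) : ℝ × ℝ) (x0, ystar) < δ := by
      rw [Prod.dist_eq]
      simp only [Real.dist_eq]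
      apply max_lt <;> [skip; skip] <;> [exact lt_of_le_of_lt ha (by linarith);
        exact lt_of_le_of_lt hb (by linarith)]
    have := hδ hdist
    rw [Real.dist_eq, abs_lt] at this
    have h2 := this.1
    rw [hmdef]
    linarith [this.1]
  -- main case split
  rcases le_or_gt (|y0 - ystar|) rbar with hcase | hcase
  · -- y0 is already in the ball
    have := hball x0 y0 (by simp [abs_nonneg]; linarith) hcase
    rw [dY_eq hreg]
    linarith
  · -- main construction
    set d : ℝ := |y0 - ystar| with hddef
    have hd0 : 0 ≤ d := abs_nonneg _
    set R : ℝ := d + 1 with hRdef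
    have hR : 0 < R := by positivity
    -- bound for q - c on the relevant interval
    obtain ⟨C, hC⟩ := (isCompact_Icc (a := x0 - R) (b := x0 + R)).exists_bound_of_continuousOn
      ((hq.sub continuous_const).continuousOn)
    set B : ℝ := max C 0 with hBdef
    have hB0 : 0 ≤ B := le_max_right _ _
    have hB : ∀ x ∈ Set.Icc (x0 - R) (x0 + R), |q x - c| ≤ B := by
      intro x hx
      calc |q x - c| = ‖q x - c‖ := (Real.norm_eq_abs _).symm
        _ ≤ C := hC x hx
        _ ≤ B := le_max_left _ _
    -- choice of lambda
    set ρ : ℝ := rbar / 2 with hρdef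
    have hρ : 0 < ρ := by positivity
    set lam : ℝ := (4 + 2*R*B + (K' + 1) * ρ^2) / ρ^2 with hlamdef
    have hρ2 : 0 < ρ^2 := by positivity
    have hRB0 : 0 ≤ R * B := mul_nonneg hR.le hB0
    have hlam : 0 < lam := by
      rw [hlamdef]
      apply div_pos _ hρ2
      nlinarith
    have hlamρ : lam * ρ^2 = 4 + 2*R*B + (K' + 1) * ρ^2 := by
      rw [hlamdef]; field_simp
    have hlam2 : K' + 1 ≤ lam := by
      rw [hlamdef, le_div_iff₀ hρ2]
      nlinarith
    have hc14 : 4 ≤ lam * ρ^2 := by rw [hlamρ]; nlinarith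
    have hkey : 4*lam + 2*lam*R*B + K' + 1 ≤ 4*lam^2*ρ^2 := by
      have e : 4*lam^2*ρ^2 = 4*lam*(lam*ρ^2) := by ring
      rw [e, hlamρ]
      nlinarith [mul_nonneg hlam.le hRB0, mul_nonneg hlam.le hρ2.le,
        mul_nonneg (mul_nonneg hlam.le (by linarith : (0:ℝ) ≤ K' + 1)) hρ2.le]
    -- apply key_step for all small h
    set E : ℝ := Real.exp (-lam * R^2) with hEdef
    set wp0 : ℝ := gauss lam x0 x0 * gauss lam ystar y0 - E with hwp0def
    have hwp0 : 0 < wp0 := by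
      rw [hwp0def]
      have h1 : gauss lam x0 x0 = 1 := by
        unfold gauss; simp
      have h2 : E < gauss lam ystar y0 := by
        rw [hEdef]; unfold gauss
        apply Real.exp_lt_exp.2
        have : (y0 - ystar)^2 < R^2 := by
          have : (y0 - ystar)^2 = d^2 := by rw [hddef, ← sq_abs]
          rw [this, hRdef]; nlinarith
        nlinarith
      rw [h1]; linarith
    have hslope_bound : ∀ h : ℝ, 0 < h → h ≤ ρ → m * h * wp0 ≤ φ x0 (y0 + h) - φ x0 y0 := by
      intro h hh0 hhρ
      have hp1 : ρ^2 ≤ (x0 - x0)^2 + (y0 - ystar)^2 := by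
        have : (y0 - ystar)^2 = d^2 := by rw [hddef, ← sq_abs]
        simp only [sub_self]
        rw [this]
        have hρd : ρ < d := by rw [hρdef]; linarith only [hcase, hrbar]
        have h1 : ρ^2 ≤ d^2 := pow_le_pow_left₀ hρ.le hρd.le 2
        linarith only [h1]
      have hp2 : (x0 - x0)^2 + (y0 - ystar)^2 ≤ R^2 := by
        have : (y0 - ystar)^2 = d^2 := by rw [hddef, ← sq_abs]
        simp only [sub_self]
        rw [this, hRdef]
        linarith only [hd0, sq_nonneg d]
      have := key_step φ hreg q c f hpde hz K' hK1 hlip x0 ystar m rbar hm hrbar hball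
        R B lam hR hB hB0 hlam hkey h hh0 hhρ
        ((x0, y0) : ℝ × ℝ) hp1 hp2
      rw [hwp0def, hEdef]
      exact this
    -- pass to the limit
    have hderiv := hasY hreg x0 y0
    have hslope := hasDerivAt_iff_tendsto_slope.1 hderiv
    have hslope' : Filter.Tendsto (slope (fun t => φ x0 t) y0) (nhdsWithin y0 (Set.Ioi y0))
        (nhds (PY φ (x0, y0))) :=
      hslope.mono_left (nhdsWithin_mono y0 (fun t ht => ne_of_gt ht))
    have hev : ∀ᶠ t in nhdsWithin y0 (Set.Ioi y0), m * wp0 ≤ slope (fun t => φ x0 t) y0 t := by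
      have hmem : Set.Ioc y0 (y0 + ρ) ∈ nhdsWithin y0 (Set.Ioi y0) :=
        Ioc_mem_nhdsGT_of_mem ⟨le_refl y0, by linarith⟩
      filter_upwards [hmem] with t ht
      have hh0 : 0 < t - y0 := sub_pos.2 ht.1
      have hhρ : t - y0 ≤ ρ := by linarith [ht.2]
      have hb := hslope_bound (t - y0) hh0 hhρ
      rw [slope_def_field]
      rw [show y0 + (t - y0) = t by ring] at hb
      rw [le_div_iff₀ hh0]
      calc m * wp0 * (t - y0) = m * (t - y0) * wp0 := by ring
        _ ≤ φ x0 t - φ x0 y0 := hb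
    have hlim : m * wp0 ≤ PY φ (x0, y0) :=
      ge_of_tendsto hslope' hev
    rw [dY_eq hreg]
    linarith only [hlim, mul_pos hm hwp0]
end
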